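/- Let r ≥ 1 and let λ, μ ∈ ℝ^r satisfy λ_1 ≥ … ≥ λ_r ≥ 0 and μ_1 ≥ … ≥ μ_r ≥ 0. Suppose λ − μ = Σ_{i=1}^{r} c_i α_i with every c_i a positive integer, where α_i = e_i − e_{i+1} for 1 ≤ i ≤ r−1 and α_r = e_r. Then the affine dimension of BZ_{λ,μ} = {T ∈ BZ_λ : wt(T) = μ} equals the affine dimension of BZ_λ minus r. -/

import Mathlib

open scoped BigOperators

noncomputable section

/-- 1-based standard basis vector `e i` of `ℝ^r`. -/
def stdVec (r i : ℕ) : Fin r → ℝ := fun k => if (k : ℕ) + 1 = i then 1 else 0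

/-- Type B/C BZ inequalities. -/
def IsBZBC (r : ℕ) (x y : ℕ → ℕ → ℝ) : Prop :=
  (∀ i j, 1 ≤ i → i ≤ j → j ≤ r → y i j ≤ x i j) ∧
  (∀ i j, 1 ≤ i → i < j → j ≤ r → y i j ≤ x (i + 1) j) ∧
  (∀ i j, 1 ≤ i → i ≤ j → j + 1 ≤ r → x i (j + 1) ≤ y i j ∧ x (i + 1) (j + 1) ≤ y i j) ∧
  (∀ i, 1 ≤ i → i ≤ r → 0 ≤ y i r)

def BZsetBC (r : ℕ) (lam : ℕ → ℝ) : Set ((ℕ → ℕ → ℝ) × (ℕ → ℕ → ℝ)) :=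
  {p | (∀ j, 1 ≤ j → j ≤ r → p.1 1 j = lam j) ∧ IsBZBC r p.1 p.2 ∧
       (∀ i j, ¬(1 ≤ i ∧ i ≤ j ∧ j ≤ r) → p.1 i j = 0) ∧
       (∀ i j, ¬(1 ≤ i ∧ i ≤ j ∧ j ≤ r) → p.2 i j = 0)}

def wtBC (r : ℕ) (p : (ℕ → ℕ → ℝ) × (ℕ → ℕ → ℝ)) (i : ℕ) : ℝ :=
  (∑ j ∈ Finset.Icc i r, p.1 i j) + (∑ j ∈ Finset.Icc (i + 1) r, p.1 (i + 1) j)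
    - 2 * ∑ j ∈ Finset.Icc i r, p.2 i j

def IsBZD (r : ℕ) (x y : ℕ → ℕ → ℝ) : Prop :=
  (∀ i j, 1 ≤ i → i ≤ j → j + 1 ≤ r → y i j ≤ x i j) ∧
  (∀ i j, 1 ≤ i → i < j → j + 1 ≤ r → y i j ≤ x (i + 1) j) ∧
  (∀ i j, 1 ≤ i → i ≤ j → j + 1 ≤ r → x i (j + 1) ≤ y i j ∧ x (i + 1) (j + 1) ≤ y i j) ∧
  (∀ i, 1 ≤ i → i + 2 ≤ r → y i (r - 1) ≤ x i r + x (i + 1) r + min (x i (r - 1)) (x (i + 1) (r - 1))) ∧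
  (y (r - 1) (r - 1) ≤ x (r - 1) r + x r r + x (r - 1) (r - 1))

def BZsetD (r : ℕ) (lam : ℕ → ℝ) : Set ((ℕ → ℕ → ℝ) × (ℕ → ℕ → ℝ)) :=
  {p | (∀ j, 1 ≤ j → j ≤ r → p.1 1 j = lam j) ∧ IsBZD r p.1 p.2 ∧
       (∀ i j, ¬(1 ≤ i ∧ i ≤ j ∧ j ≤ r) → p.1 i j = 0) ∧
       (∀ i j, ¬(1 ≤ i ∧ i ≤ j ∧ j + 1 ≤ r) → p.2 i j = 0)}

def wtD (r : ℕ) (p : (ℕ → ℕ → ℝ) × (ℕ → ℕ → ℝ)) (i : ℕ) : ℝ :=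
  (∑ j ∈ Finset.Icc i r, p.1 i j) + (∑ j ∈ Finset.Icc (i + 1) r, p.1 (i + 1) j)
    - 2 * ∑ j ∈ Finset.Icc i (r - 1), p.2 i j

/-- Affine dimension of a subset of a real vector space. -/
def affDim {V : Type*} [AddCommGroup V] [Module ℝ V] (A : Set V) : ℕ :=
  Module.finrank ℝ (vectorSpan ℝ A)

def simpleRootB (r i : ℕ) : Fin r → ℝ :=
  if i = r then stdVec r r else stdVec r i - stdVec r (i + 1)

def simpleRootC (r i : ℕ) : Fin r → ℝ :=
  if i = r then (2 : ℝ) • stdVec r r else stdVec r i - stdVec r (i + 1)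

def simpleRootD (r i : ℕ) : Fin r → ℝ :=
  if i = r then stdVec r (r - 1) + stdVec r r else stdVec r i - stdVec r (i + 1)

def posRootsB (r : ℕ) : Set (Fin r → ℝ) :=
  {v | ∃ i j, 1 ≤ i ∧ i < j ∧ j ≤ r ∧ (v = stdVec r i - stdVec r j ∨ v = stdVec r i + stdVec r j)}
    ∪ {v | ∃ i, 1 ≤ i ∧ i ≤ r ∧ v = stdVec r i}

def posRootsC (r : ℕ) : Set (Fin r → ℝ) :=
  {v | ∃ i j, 1 ≤ i ∧ i < j ∧ j ≤ r ∧ (v = stdVec r i - stdVec r j ∨ v = stdVec r i + stdVec r j)}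
    ∪ {v | ∃ i, 1 ≤ i ∧ i ≤ r ∧ v = (2 : ℝ) • stdVec r i}

def posRootsD (r : ℕ) : Set (Fin r → ℝ) :=
  {v | ∃ i j, 1 ≤ i ∧ i < j ∧ j ≤ r ∧ (v = stdVec r i - stdVec r j ∨ v = stdVec r i + stdVec r j)}

/-- `f` is a quasi-polynomial of degree exactly `d` on positive integers. -/
def IsQuasiPolyOfDegree (f : ℕ → ℕ) (d : ℕ) : Prop :=
  ∃ T : ℕ, 0 < T ∧ ∃ P : ℕ → Polynomial ℚ,
    (∀ k < T, (P k).degree = (d : ℕ)) ∧ ∀ N : ℕ, 0 < N → (f N : ℚ) = (P (N % T)).eval (N : ℚ)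

end

/-! ### Auxiliary development -/

namespace BZaux

open Finset

noncomputable section

/-- From local decrease, global decrease on `[1, r]`. -/
lemma decChain {r : ℕ} {f : ℕ → ℝ} (h : ∀ k, 1 ≤ k → k < r → f (k + 1) ≤ f k) :
    ∀ a b, 1 ≤ a → a ≤ b → b ≤ r → f b ≤ f a := by
  intro a b ha hab hbr
  induction b with
  | zero => omega
  | succ m ih =>
    rcases Nat.eq_or_lt_of_le hab with he | hlt
    · exact le_of_eq (by rw [he])
    · exact le_trans (h m (by omega) (by omega)) (ih (by omega) (by omega))

lemma sum_shift (a b : ℕ) (f : ℕ → ℝ) :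
    ∑ j ∈ Icc (a + 1) (b + 1), f j = ∑ j ∈ Icc a b, f (j + 1) := by
  rw [← Finset.map_add_right_Icc a b 1, Finset.sum_map]
  rfl

/-- Telescoping over `Icc (a+1) b`. -/
lemma telescope (g : ℕ → ℝ) (a : ℕ) :
    ∀ b, a ≤ b → ∑ k ∈ Icc (a + 1) b, (g k - g (k - 1)) = g b - g a := by
  intro b
  induction b with
  | zero => intro h; simp [Nat.le_zero.mp h]
  | succ m ih =>
    intro h
    rcases Nat.eq_or_lt_of_le h with he | hlt
    · rw [← he]; simp
    · rw [Finset.sum_Icc_succ_top (by omega), ih (by omega)]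
      simp only [Nat.add_sub_cancel]
      ring

/-- Fill a box with prescribed sum. -/
lemma fill (n : ℕ) : ∀ (A B : ℕ → ℝ) (T : ℝ), (∀ j, 1 ≤ j → j ≤ n → A j ≤ B j) →
    (∑ j ∈ Icc 1 n, A j) ≤ T → T ≤ ∑ j ∈ Icc 1 n, B j →
    ∃ y : ℕ → ℝ, (∀ j, 1 ≤ j → j ≤ n → A j ≤ y j ∧ y j ≤ B j) ∧ ∑ j ∈ Icc 1 n, y j = T := by
  induction n with
  | zero =>
    intro A B T _ h1 h2
    refine ⟨fun _ => 0, fun j hj hj' => absurd hj' (by omega), ?_⟩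
    have he : Icc 1 0 = (∅ : Finset ℕ) := by simp
    rw [he] at h1 h2 ⊢
    simp at h1 h2 ⊢
    linarith
  | succ n ih =>
    intro A B T hAB h1 h2
    have hsA : ∑ j ∈ Icc 1 (n+1), A j = (∑ j ∈ Icc 1 n, A j) + A (n+1) :=
      Finset.sum_Icc_succ_top (by omega) _
    have hsB : ∑ j ∈ Icc 1 (n+1), B j = (∑ j ∈ Icc 1 n, B j) + B (n+1) :=
      Finset.sum_Icc_succ_top (by omega) _
    have hABn : ∑ j ∈ Icc 1 n, A j ≤ ∑ j ∈ Icc 1 n, B j :=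
      Finset.sum_le_sum (fun j hj => hAB j (mem_Icc.mp hj).1 (le_trans (mem_Icc.mp hj).2 (by omega)))
    set v := max (A (n+1)) (T - ∑ j ∈ Icc 1 n, B j) with hv
    have hvA : A (n+1) ≤ v := le_max_left _ _
    have hvB : v ≤ B (n+1) := by
      apply max_le (hAB (n+1) (by omega) le_rfl)
      rw [hsB] at h2; linarith
    have hv2 : T - ∑ j ∈ Icc 1 n, B j ≤ v := le_max_right _ _
    have hc1 : ∑ j ∈ Icc 1 n, A j ≤ T - v := by
      have : v ≤ T - ∑ j ∈ Icc 1 n, A j := by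
        apply max_le
        · rw [hsA] at h1; linarith
        · linarith
      linarith
    have hc2 : T - v ≤ ∑ j ∈ Icc 1 n, B j := by linarith
    obtain ⟨y, hy, hysum⟩ := ih A B (T - v) (fun j hj hj' => hAB j hj (by omega)) hc1 hc2
    refine ⟨fun j => if j = n + 1 then v else y j, ?_, ?_⟩
    · intro j hj hj'
      by_cases hje : j = n + 1
      · subst hje; simp only [if_pos rfl]; exact ⟨hvA, hvB⟩
      · simp only [if_neg hje]; exact hy j hj (by omega)
    · rw [Finset.sum_Icc_succ_top (by omega : 1 ≤ n + 1), if_pos rfl]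
      have : ∑ j ∈ Icc 1 n, (if j = n + 1 then v else y j) = ∑ j ∈ Icc 1 n, y j := by
        apply Finset.sum_congr rfl
        intro j hj
        rw [if_neg (by have := (mem_Icc.mp hj).2; omega)]
      rw [this, hysum]; ring

end

end BZaux

namespace BZaux

open Finset

noncomputable section

/-- Greedy cumulative raise function. -/
def sigAux (lam : ℕ → ℝ) (D : ℝ) : ℕ → ℝ
  | 0 => 0
  | (m+1) => if m = 0 then 0 else
      sigAux lam D m + min (lam m - lam (m+1)) (max 0 (D - sigAux lam D m))

lemma sigAux_succ (lam : ℕ → ℝ) (D : ℝ) (m : ℕ) (hm : 1 ≤ m) :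
    sigAux lam D (m+1) = sigAux lam D m
      + min (lam m - lam (m+1)) (max 0 (D - sigAux lam D m)) := by
  rw [sigAux, if_neg (by omega)]

lemma sigAux_one (lam : ℕ → ℝ) (D : ℝ) : sigAux lam D 1 = 0 := by
  rw [sigAux, if_pos rfl]

/-- Closed form of the greedy raise. -/
lemma sigAux_cf {R : ℕ} {lam : ℕ → ℝ} {D : ℝ} (hD : 0 ≤ D)
    (hdec : ∀ k, 1 ≤ k → k < R → lam (k + 1) ≤ lam k) :
    ∀ j, 1 ≤ j → j ≤ R → sigAux lam D j = min (lam 1 - lam j) D := by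
  intro j
  induction j with
  | zero => omega
  | succ m ih =>
    intro h1 h2
    rcases Nat.eq_zero_or_pos m with hm | hm
    · subst hm
      rw [sigAux_one]
      simp [hD]
    · rw [sigAux_succ _ _ _ hm, ih (by omega) (by omega)]
      have hstep : lam (m+1) ≤ lam m := hdec m (by omega) (by omega)
      rcases le_total D (lam 1 - lam m) with hc | hc
      · rw [min_eq_right hc]
        have h0 : max 0 (D - D) = 0 := by simp
        rw [h0, min_eq_right (by linarith), min_eq_right (by linarith)]
        ring
      · rw [min_eq_left hc]
        have h0 : max 0 (D - (lam 1 - lam m)) = D - (lam 1 - lam m) := by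
          rw [max_eq_right]; linarith
        rw [h0]
        rcases le_total (lam m - lam (m+1)) (D - (lam 1 - lam m)) with h | h
        · rw [min_eq_left h, min_eq_left (by linarith)]; ring
        · rw [min_eq_right h, min_eq_right (by linarith)]; ring

lemma sum_shift' {a b a' b' : ℕ} (f : ℕ → ℝ) (h1 : a' = a + 1) (h2 : b' = b + 1) :
    ∑ j ∈ Icc a' b', f j = ∑ j ∈ Icc a b, f (j + 1) := by
  subst h1; subst h2; exact sum_shift a b f

lemma sum_Icc_bot {a b : ℕ} (h : a ≤ b) (f : ℕ → ℝ) :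
    ∑ j ∈ Icc a b, f j = f a + ∑ j ∈ Icc (a + 1) b, f j := by
  have he : Icc a b = insert a (Icc (a+1) b) := by
    ext k; simp only [mem_Icc, mem_insert]; omega
  rw [he, Finset.sum_insert (by simp [mem_Icc])]

/-- Existence of a real BZ pattern of type B/C with prescribed weight close to a
strictly dominated dominant weight. -/
lemma EX (r : ℕ) : ∀ (lam mu nu : ℕ → ℝ) (eta eps : ℝ), 0 < eta → 0 ≤ eps →
    2^r * eps ≤ eta →
    (∀ k, 1 ≤ k → k < r → lam (k+1) ≤ lam k) → (1 ≤ r → 0 ≤ lam r) →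
    (∀ k, 1 ≤ k → k < r → mu (k+1) ≤ mu k) → (1 ≤ r → 0 ≤ mu r) →
    (∀ j, 1 ≤ j → j ≤ r → eta ≤ ∑ k ∈ Icc 1 j, (lam k - mu k)) →
    (∀ k, 1 ≤ k → k ≤ r → |nu k - mu k| ≤ eps) →
    ∃ p, p ∈ BZsetBC r lam ∧ ∀ i, 1 ≤ i → i ≤ r → wtBC r p i = nu i := by
  induction r with
  | zero =>
    intro lam mu nu eta eps _ _ _ _ _ _ _ _ _
    refine ⟨(fun _ _ => 0, fun _ _ => 0), ⟨?_, ⟨?_, ?_, ?_, ?_⟩, ?_, ?_⟩, ?_⟩ <;>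
      intros <;> first | rfl | omega
  | succ n ih =>
    intro lam mu nu eta eps heta heps hpow hld hl0 hmd hm0 hDbig hnu
    have hlch : ∀ a b, 1 ≤ a → a ≤ b → b ≤ n+1 → lam b ≤ lam a := decChain hld
    have hmch : ∀ a b, 1 ≤ a → a ≤ b → b ≤ n+1 → mu b ≤ mu a := decChain hmd
    have hmnn : ∀ k, 1 ≤ k → k ≤ n+1 → 0 ≤ mu k := fun k h1 h2 =>
      le_trans (hm0 (by omega)) (hmch k (n+1) h1 h2 le_rfl)
    have h2n : (1:ℝ) ≤ 2^n := one_le_pow₀ (by norm_num)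
    have heps_eta : 2 * eps ≤ eta := by
      have : 2 * eps ≤ 2^(n+1) * eps := by
        apply mul_le_mul_of_nonneg_right _ heps
        rw [pow_succ]
        nlinarith
      linarith
    have hpow' : 2^n * eps ≤ eta / 2 := by
      rw [pow_succ] at hpow; nlinarith
    set D : ℕ → ℝ := fun j => ∑ k ∈ Icc 1 j, (lam k - mu k) with hDdef
    have hD1 : D 1 = lam 1 - mu 1 := by simp [hDdef]
    set Dl : ℝ := Finset.fold max 0 (fun j => D 1 - D j + eta/2) (Icc 2 (n+1)) with hDl
    have hDl0 : 0 ≤ Dl := by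
      rw [hDl]
      induction (Icc 2 (n+1)) using Finset.induction with
      | empty => simp
      | insert _ _ h =>
        rw [Finset.fold_insert h]
        exact le_trans (by assumption) (le_max_right _ _)
    have hDlj : ∀ j, 2 ≤ j → j ≤ n+1 → D 1 - D j + eta/2 ≤ Dl := by
      intro j h1 h2
      rw [hDl]
      have hmem : j ∈ Icc 2 (n+1) := mem_Icc.mpr ⟨h1, h2⟩
      exact (Finset.le_fold_max _).mpr (Or.inr ⟨j, hmem, le_rfl⟩)
    have hDlle : Dl ≤ D 1 - eta/2 := by
      rw [hDl]
      rw [Finset.fold_max_le]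
      constructor
      · have := hDbig 1 le_rfl (by omega); linarith
      · intro j hj
        have hj' := mem_Icc.mp hj
        have := hDbig j (by omega) hj'.2
        simp only [hDdef] at *
        linarith
    set sg : ℕ → ℝ := sigAux lam Dl with hsg
    have hsgcf : ∀ j, 1 ≤ j → j ≤ n+1 → sg j = min (lam 1 - lam j) Dl :=
      sigAux_cf hDl0 hld
    have hsg_nonneg : ∀ m, 1 ≤ m → m ≤ n → 0 ≤ sg (m+1) - sg m := by
      intro m h1 h2
      rw [hsg, sigAux_succ _ _ _ h1]
      have : lam (m+1) ≤ lam m := hld m h1 (by omega)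
      have h3 : (0:ℝ) ≤ max 0 (Dl - sigAux lam Dl m) := le_max_left _ _
      have := le_min (by linarith : (0:ℝ) ≤ lam m - lam (m+1)) h3
      linarith
    have hsg_cap : ∀ m, 1 ≤ m → m ≤ n → sg (m+1) - sg m ≤ lam m - lam (m+1) := by
      intro m h1 h2
      rw [hsg, sigAux_succ _ _ _ h1]
      have := min_le_left (lam m - lam (m+1)) (max 0 (Dl - sigAux lam Dl m))
      linarith
    set x2 : ℕ → ℝ := fun k => lam k + (sg k - sg (k-1)) with hx2
    have hx2ge : ∀ k, 2 ≤ k → k ≤ n+1 → lam k ≤ x2 k := by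
      intro k h1 h2
      obtain ⟨m, rfl⟩ : ∃ m, k = m + 1 := ⟨k - 1, by omega⟩
      have := hsg_nonneg m (by omega) (by omega)
      simp only [hx2, Nat.add_sub_cancel]
      linarith
    have hx2cap : ∀ k, 2 ≤ k → k ≤ n+1 → x2 k ≤ lam (k-1) := by
      intro k h1 h2
      obtain ⟨m, rfl⟩ : ∃ m, k = m + 1 := ⟨k - 1, by omega⟩
      have := hsg_cap m (by omega) (by omega)
      simp only [hx2, Nat.add_sub_cancel]
      linarith
    have hx2dec : ∀ k, 2 ≤ k → k ≤ n → x2 (k+1) ≤ x2 k := by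
      intro k h1 h2
      have ha := hx2cap (k+1) (by omega) (by omega)
      have hb := hx2ge k h1 (by omega)
      simp only [Nat.add_sub_cancel] at ha
      linarith
    -- partial sums of x2
    have hx2sum : ∀ J, 1 ≤ J → J ≤ n+1 →
        ∑ k ∈ Icc 2 J, x2 k = (∑ k ∈ Icc 2 J, lam k) + sg J := by
      intro J h1 h2
      have htel : ∑ k ∈ Icc 2 J, (sg k - sg (k-1)) = sg J - sg 1 := telescope sg 1 J h1
      have hsg1 : sg 1 = 0 := sigAux_one lam Dl
      rw [hx2]
      rw [Finset.sum_add_distrib, htel, hsg1]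
      ring
    -- interface row bounds
    set A : ℕ → ℝ := fun j => if j = n+1 then 0 else x2 (j+1) with hA
    set B : ℕ → ℝ := fun j => lam j with hB
    have hAval : ∀ j, j ≤ n → A j = x2 (j+1) := by
      intro j hj; simp only [hA]; rw [if_neg (by omega)]
    have hAtop : A (n+1) = 0 := by simp [hA]
    have hBval : ∀ j, B j = lam j := fun j => rfl
    have hABle : ∀ j, 1 ≤ j → j ≤ n+1 → A j ≤ B j := by
      intro j h1 h2
      by_cases hj : j = n+1
      · subst hj; rw [hAtop, hBval]; exact hl0 (by omega)
      · rw [hAval j (by omega), hBval]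
        have := hx2cap (j+1) (by omega) (by omega)
        simpa using this
    have hAsum : ∑ j ∈ Icc 1 (n+1), A j = ∑ k ∈ Icc 2 (n+1), x2 k := by
      rw [Finset.sum_Icc_succ_top (by omega : 1 ≤ n+1), hAtop]
      have h2 : ∑ j ∈ Icc 1 n, A j = ∑ j ∈ Icc 1 n, x2 (j+1) :=
        Finset.sum_congr rfl (fun j hj => hAval j (mem_Icc.mp hj).2)
      rw [h2, ← sum_shift' x2 (by norm_num : (2:ℕ) = 1 + 1) rfl]
      ring
    have hBsum : ∑ j ∈ Icc 1 (n+1), B j = ∑ j ∈ Icc 1 (n+1), lam j := rfl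
    set T : ℝ := ((∑ j ∈ Icc 1 (n+1), lam j) + (∑ k ∈ Icc 2 (n+1), x2 k) - nu 1) / 2 with hT
    have hnu1 := hnu 1 le_rfl (by omega)
    rw [abs_le] at hnu1
    have hsgR : sg (n+1) ≤ Dl := by
      rw [hsgcf (n+1) (by omega) le_rfl]; exact min_le_right _ _
    have hmu1 : 0 ≤ mu 1 := hmnn 1 le_rfl (by omega)
    have hlsplit : ∑ j ∈ Icc 1 (n+1), lam j = lam 1 + ∑ j ∈ Icc 2 (n+1), lam j :=
      sum_Icc_bot (by omega) lam
    have hxR := hx2sum (n+1) (by omega) le_rfl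
    have hTA : ∑ j ∈ Icc 1 (n+1), A j ≤ T := by
      rw [hAsum, hT]
      have hq : sg (n+1) + nu 1 ≤ lam 1 := by linarith [hDlle, hD1, hnu1.2, heps_eta]
      linarith [hxR, hlsplit]
    have hTB : T ≤ ∑ j ∈ Icc 1 (n+1), B j := by
      rw [hBsum, hT]
      have hq : sg (n+1) ≤ lam 1 + nu 1 := by linarith [hDlle, hD1, hnu1.1, heps_eta]
      linarith [hxR, hlsplit]
    obtain ⟨y, hy, hysum⟩ := fill (n+1) A B T hABle hTA hTB
    -- sub-call hypotheses
    have hld' : ∀ k, 1 ≤ k → k < n → x2 (k+1+1) ≤ x2 (k+1) := by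
      intro k h1 h2; exact hx2dec (k+1) (by omega) (by omega)
    have hl0' : 1 ≤ n → 0 ≤ x2 (n+1) := by
      intro h
      have h1 : 0 ≤ lam (n+1) := hl0 (by omega)
      have h2 := hx2ge (n+1) (by omega) le_rfl
      linarith
    have hD' : ∀ j, 1 ≤ j → j ≤ n →
        eta/2 ≤ ∑ k ∈ Icc 1 j, (x2 (k+1) - mu (k+1)) := by
      intro j h1 h2
      have hsh : ∑ k ∈ Icc 1 j, (x2 (k+1) - mu (k+1))
          = ∑ k ∈ Icc 2 (j+1), (x2 k - mu k) :=
        (sum_shift' (fun k => x2 k - mu k) (by norm_num : (2:ℕ) = 1 + 1) rfl).symm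
      have hx := hx2sum (j+1) (by omega) (by omega)
      have hsub : ∑ k ∈ Icc 2 (j+1), (x2 k - mu k)
          = (∑ k ∈ Icc 2 (j+1), x2 k) - ∑ k ∈ Icc 2 (j+1), mu k :=
        Finset.sum_sub_distrib _ _
      have hDsplit : D (j+1) = (lam 1 - mu 1) + ∑ k ∈ Icc 2 (j+1), (lam k - mu k) := by
        simp only [hDdef]
        exact sum_Icc_bot (by omega) _
      have hlm : ∑ k ∈ Icc 2 (j+1), (lam k - mu k)
          = (∑ k ∈ Icc 2 (j+1), lam k) - ∑ k ∈ Icc 2 (j+1), mu k :=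
        Finset.sum_sub_distrib _ _
      rw [hsh, hsub, hx, hsgcf (j+1) (by omega) (by omega)]
      rcases le_total Dl (lam 1 - lam (j+1)) with hc | hc
      · rw [min_eq_right hc]
        have h3 := hDlj (j+1) (by omega) (by omega)
        linarith [hDsplit, hlm, hD1]
      · rw [min_eq_left hc]
        have hDj := hDbig j h1 (by omega)
        have hmuj : mu (j+1) ≤ mu 1 := hmch 1 (j+1) le_rfl (by omega) (by omega)
        have i1 : ∑ k ∈ Icc 1 (j+1), lam k = lam 1 + ∑ k ∈ Icc 2 (j+1), lam k :=
          sum_Icc_bot (by omega) lam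
        have i2 : ∑ k ∈ Icc 1 (j+1), lam k = (∑ k ∈ Icc 1 j, lam k) + lam (j+1) :=
          Finset.sum_Icc_succ_top (by omega) lam
        have i3 : ∑ k ∈ Icc 1 (j+1), mu k = mu 1 + ∑ k ∈ Icc 2 (j+1), mu k :=
          sum_Icc_bot (by omega) mu
        have i4 : ∑ k ∈ Icc 1 (j+1), mu k = (∑ k ∈ Icc 1 j, mu k) + mu (j+1) :=
          Finset.sum_Icc_succ_top (by omega) mu
        have i5 : (∑ k ∈ Icc 1 j, (lam k - mu k))
            = (∑ k ∈ Icc 1 j, lam k) - ∑ k ∈ Icc 1 j, mu k := Finset.sum_sub_distrib _ _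
        have hDjval := hDbig j h1 (by omega)
        linarith [i1, i2, i3, i4, i5]
    obtain ⟨p', hp'mem, hp'wt⟩ := ih (fun k => x2 (k+1)) (fun k => mu (k+1))
      (fun k => nu (k+1)) (eta/2) eps (by linarith) heps hpow'
      hld' hl0'
      (fun k h1 h2 => hmd (k+1) (by omega) (by omega))
      (fun h => hmnn (n+1) (by omega) le_rfl)
      hD'
      (fun k h1 h2 => hnu (k+1) (by omega) (by omega))
    obtain ⟨h'top, ⟨h'c1, h'c2, h'c3, h'c4⟩, h'z1, h'z2⟩ := hp'mem
    set px : ℕ → ℕ → ℝ := fun i j =>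
      if 1 ≤ i ∧ i ≤ j ∧ j ≤ n+1 then (if i = 1 then lam j else p'.1 (i-1) (j-1)) else 0 with hpx
    set py : ℕ → ℕ → ℝ := fun i j =>
      if 1 ≤ i ∧ i ≤ j ∧ j ≤ n+1 then (if i = 1 then y j else p'.2 (i-1) (j-1)) else 0 with hpy
    have hpx1 : ∀ j, 1 ≤ j → j ≤ n+1 → px 1 j = lam j := by
      intro j h1 h2; simp only [hpx]
      rw [if_pos ⟨le_rfl, h1, h2⟩]; norm_num
    have hpy1 : ∀ j, 1 ≤ j → j ≤ n+1 → py 1 j = y j := by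
      intro j h1 h2; simp only [hpy]
      rw [if_pos ⟨le_rfl, h1, h2⟩]; norm_num
    have hpxs : ∀ m j, 1 ≤ m → m+1 ≤ j → j ≤ n+1 → px (m+1) j = p'.1 m (j-1) := by
      intro m j h1 h2 h3; simp only [hpx]
      rw [if_pos ⟨by omega, h2, h3⟩, if_neg (by omega)]
      simp only [Nat.add_sub_cancel]
    have hpys : ∀ m j, 1 ≤ m → m+1 ≤ j → j ≤ n+1 → py (m+1) j = p'.2 m (j-1) := by
      intro m j h1 h2 h3; simp only [hpy]
      rw [if_pos ⟨by omega, h2, h3⟩, if_neg (by omega)]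
      simp only [Nat.add_sub_cancel]
    have htop' : ∀ j, 1 ≤ j → j ≤ n → p'.1 1 j = x2 (j+1) := by
      intro j h1 h2; simpa using h'top j h1 h2
    have hpx2 : ∀ j, 2 ≤ j → j ≤ n+1 → px 2 j = x2 j := by
      intro j h1 h2
      have h3 : px (1+1) j = p'.1 1 (j-1) := hpxs 1 j le_rfl (by omega) h2
      have h4 : px 2 j = p'.1 1 (j-1) := by convert h3 using 3
      rw [h4, htop' (j-1) (by omega) (by omega)]
      congr 1
      omega
    refine ⟨(px, py), ⟨?_, ⟨?_, ?_, ?_, ?_⟩, ?_, ?_⟩, ?_⟩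
    · exact fun j h1 h2 => hpx1 j h1 h2
    · -- c1
      intro i j h1 h2 h3
      show py i j ≤ px i j
      by_cases hi : i = 1
      · subst hi
        rw [hpy1 j (by omega) h3, hpx1 j (by omega) h3]
        have := (hy j (by omega) h3).2
        rwa [hBval] at this
      · obtain ⟨m, rfl⟩ : ∃ m, i = m + 1 := ⟨i - 1, by omega⟩
        rw [hpys m j (by omega) h2 h3, hpxs m j (by omega) h2 h3]
        exact h'c1 m (j-1) (by omega) (by omega) (by omega)
    · -- c2
      intro i j h1 h2 h3
      show py i j ≤ px (i+1) j
      by_cases hi : i = 1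
      · subst hi
        rw [hpy1 j (by omega) h3, hpx2 j (by omega) h3]
        have ha := (hy j (by omega) h3).2
        rw [hBval] at ha
        have hb := hx2ge j (by omega) h3
        linarith
      · obtain ⟨m, rfl⟩ : ∃ m, i = m + 1 := ⟨i - 1, by omega⟩
        rw [hpys m j (by omega) (by omega) h3, hpxs (m+1) j (by omega) (by omega) h3]
        exact h'c2 m (j-1) (by omega) (by omega) (by omega)
    · -- c3
      intro i j h1 h2 h3
      show px i (j+1) ≤ py i j ∧ px (i+1) (j+1) ≤ py i j
      by_cases hi : i = 1
      · subst hi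
        have hyj := hy j (by omega) (by omega)
        rw [hAval j (by omega)] at hyj
        constructor
        · rw [hpx1 (j+1) (by omega) h3, hpy1 j (by omega) (by omega)]
          have := hx2ge (j+1) (by omega) h3
          linarith [hyj.1]
        · rw [hpy1 j (by omega) (by omega)]
          have h4 : px (1+1) (j+1) = p'.1 1 ((j+1)-1) := hpxs 1 (j+1) le_rfl (by omega) h3
          have h5 : px 2 (j+1) = p'.1 1 j := by
            rw [show ((j+1)-1) = j from rfl] at h4
            convert h4 using 3
          rw [h5, htop' j (by omega) (by omega)]
          exact hyj.1
      · obtain ⟨m, rfl⟩ : ∃ m, i = m + 1 := ⟨i - 1, by omega⟩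
        have hc := h'c3 m (j-1) (by omega) (by omega) (by omega)
        have hj1 : j - 1 + 1 = j := by omega
        rw [hj1] at hc
        constructor
        · rw [hpxs m (j+1) (by omega) (by omega) h3, hpys m j (by omega) (by omega) (by omega)]
          simpa using hc.1
        · rw [hpxs (m+1) (j+1) (by omega) (by omega) h3, hpys m j (by omega) (by omega) (by omega)]
          simpa using hc.2
    · -- c4
      intro i h1 h2
      show 0 ≤ py i (n+1)
      by_cases hi : i = 1
      · subst hi
        rw [hpy1 (n+1) (by omega) le_rfl]
        have := (hy (n+1) (by omega) le_rfl).1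
        rwa [hAtop] at this
      · obtain ⟨m, rfl⟩ : ∃ m, i = m + 1 := ⟨i - 1, by omega⟩
        rw [hpys m (n+1) (by omega) h2 le_rfl]
        have := h'c4 m (by omega) (by omega)
        simpa using this
    · intro i j hc; show px i j = 0; simp only [hpx]; rw [if_neg hc]
    · intro i j hc; show py i j = 0; simp only [hpy]; rw [if_neg hc]
    · -- weights
      intro i h1 h2
      by_cases hi : i = 1
      · subst hi
        show (∑ j ∈ Icc 1 (n+1), px 1 j) + (∑ j ∈ Icc (1+1) (n+1), px (1+1) j)
            - 2 * ∑ j ∈ Icc 1 (n+1), py 1 j = nu 1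
        have e1 : ∑ j ∈ Icc 1 (n+1), px 1 j = ∑ j ∈ Icc 1 (n+1), lam j :=
          Finset.sum_congr rfl (fun j hj => hpx1 j (mem_Icc.mp hj).1 (mem_Icc.mp hj).2)
        have e2 : ∑ j ∈ Icc (1+1) (n+1), px (1+1) j = ∑ j ∈ Icc 2 (n+1), x2 j := by
          apply Finset.sum_congr (by norm_num)
          intro j hj
          have hj' := mem_Icc.mp hj
          have h4 : px (1+1) j = p'.1 1 (j-1) := hpxs 1 j le_rfl (by omega) (by omega)
          rw [h4, ← hpx2 j (by omega) (by omega)]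
          rw [hpxs 1 j le_rfl (by omega) (by omega)]
        have e3 : ∑ j ∈ Icc 1 (n+1), py 1 j = ∑ j ∈ Icc 1 (n+1), y j :=
          Finset.sum_congr rfl (fun j hj => hpy1 j (mem_Icc.mp hj).1 (mem_Icc.mp hj).2)
        rw [e1, e2, e3, hysum, hT]
        ring
      · obtain ⟨m, rfl⟩ : ∃ m, i = m + 1 := ⟨i - 1, by omega⟩
        show (∑ j ∈ Icc (m+1) (n+1), px (m+1) j) + (∑ j ∈ Icc (m+1+1) (n+1), px (m+1+1) j)
            - 2 * ∑ j ∈ Icc (m+1) (n+1), py (m+1) j = nu (m+1)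
        have e1 : ∑ j ∈ Icc (m+1) (n+1), px (m+1) j = ∑ j ∈ Icc m n, p'.1 m j := by
          rw [sum_shift' _ rfl rfl]
          apply Finset.sum_congr rfl
          intro j hj
          have hj' := mem_Icc.mp hj
          rw [hpxs m (j+1) (by omega) (by omega) (by omega)]
          simp only [Nat.add_sub_cancel]
        have e2 : ∑ j ∈ Icc (m+1+1) (n+1), px (m+1+1) j = ∑ j ∈ Icc (m+1) n, p'.1 (m+1) j := by
          rw [sum_shift' _ rfl rfl]
          apply Finset.sum_congr rfl
          intro j hj
          have hj' := mem_Icc.mp hj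
          rw [hpxs (m+1) (j+1) (by omega) (by omega) (by omega)]
          simp only [Nat.add_sub_cancel]
        have e3 : ∑ j ∈ Icc (m+1) (n+1), py (m+1) j = ∑ j ∈ Icc m n, p'.2 m j := by
          rw [sum_shift' _ rfl rfl]
          apply Finset.sum_congr rfl
          intro j hj
          have hj' := mem_Icc.mp hj
          rw [hpys m (j+1) (by omega) (by omega) (by omega)]
          simp only [Nat.add_sub_cancel]
        rw [e1, e2, e3]
        have := hp'wt m (by omega) (by omega)
        simpa [wtBC] using this

end

end BZaux

namespace BZaux

open Finset

noncomputable section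

/-- `lam` extended by `0` beyond `r`. -/
def Lam (r : ℕ) (lam : ℕ → ℝ) (k : ℕ) : ℝ := if k ≤ r then lam k else 0

section LamFacts

variable {r : ℕ} {lam : ℕ → ℝ}
variable (hr : 1 ≤ r) (hld : ∀ k, 1 ≤ k → k < r → lam (k + 1) ≤ lam k)
  (hl0 : 0 ≤ lam r)

include hld hl0 in
lemma Lam_nonneg : ∀ k, 1 ≤ k → 0 ≤ Lam r lam k := by
  intro k h1
  unfold Lam
  by_cases h : k ≤ r
  · rw [if_pos h]
    exact le_trans hl0 (decChain hld k r h1 h le_rfl)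
  · rw [if_neg h]

include hld hl0 in
lemma Lam_anti : ∀ a b, 1 ≤ a → a ≤ b → Lam r lam b ≤ Lam r lam a := by
  intro a b h1 h2
  unfold Lam
  by_cases hb : b ≤ r
  · rw [if_pos hb, if_pos (by omega)]
    exact decChain hld a b h1 h2 hb
  · rw [if_neg hb]
    by_cases ha : a ≤ r
    · rw [if_pos ha]
      exact le_trans hl0 (decChain hld a r h1 ha le_rfl)
    · rw [if_neg ha]

end LamFacts

lemma interp_le {lb' ub' lb ub t' t : ℝ} (h1 : lb' ≤ ub') (h2 : lb ≤ ub)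
    (h3 : lb' ≤ lb) (h4 : ub' ≤ ub) (ht'0 : 0 ≤ t') (ht1 : t ≤ 1) (htt : t' ≤ t) :
    lb' + t' * (ub' - lb') ≤ lb + t * (ub - lb) := by
  nlinarith [mul_nonneg (by linarith : (0:ℝ) ≤ t - t') (by linarith : (0:ℝ) ≤ ub' - lb'),
    mul_nonneg (by linarith : (0:ℝ) ≤ 1 - t) (by linarith : (0:ℝ) ≤ lb - lb'),
    mul_nonneg (by linarith : (0:ℝ) ≤ t) (by linarith : (0:ℝ) ≤ ub - ub')]

lemma interp_lt {lb' ub' lb ub t' t : ℝ} (h1 : lb' ≤ ub') (h2 : lb ≤ ub)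
    (h3 : lb' ≤ lb) (h4 : ub' ≤ ub) (ht'0 : 0 ≤ t') (ht1 : t ≤ 1) (htt : t' < t)
    (ht0 : 0 < t) (h5 : lb' < ub) :
    lb' + t' * (ub' - lb') < lb + t * (ub - lb) := by
  rcases eq_or_lt_of_le h1 with he | hlt
  · rw [← he]
    nlinarith [mul_nonneg (by linarith : (0:ℝ) ≤ 1 - t) (by linarith : (0:ℝ) ≤ lb - lb'),
      mul_pos ht0 (by linarith : (0:ℝ) < ub - lb')]
  · nlinarith [mul_pos (by linarith : (0:ℝ) < t - t') (by linarith : (0:ℝ) < ub' - lb'),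
      mul_nonneg (by linarith : (0:ℝ) ≤ 1 - t) (by linarith : (0:ℝ) ≤ lb - lb'),
      mul_nonneg (by linarith : (0:ℝ) ≤ t) (by linarith : (0:ℝ) ≤ ub - ub')]

/-- Interpolation parameters. -/
def tX (r j : ℕ) : ℝ := 1/2 + ((2*(r-j)+1 : ℕ) : ℝ) * (1/(8*(r:ℝ)+8))
def tY (r j : ℕ) : ℝ := 1/2 + ((2*(r-j) : ℕ) : ℝ) * (1/(8*(r:ℝ)+8))

lemma tfacts (r : ℕ) (j : ℕ) (hj : j ≤ r) :
    1/2 ≤ tY r j ∧ tY r j < tX r j ∧ tX r j ≤ 3/4 ∧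
    (j < r → tX r (j+1) < tY r j) := by
  have hden : 0 < 8*(r:ℝ)+8 := by positivity
  have hinv : 0 < 1/(8*(r:ℝ)+8) := by positivity
  refine ⟨?_, ?_, ?_, ?_⟩
  · unfold tY
    nlinarith [mul_nonneg (by positivity : (0:ℝ) ≤ ((2*(r-j) : ℕ) : ℝ)) (le_of_lt hinv)]
  · unfold tX tY
    have hc : ((2*(r-j) : ℕ) : ℝ) < ((2*(r-j)+1 : ℕ) : ℝ) := by exact_mod_cast Nat.lt_succ_self _
    nlinarith
  · unfold tX
    have hc : ((2*(r-j)+1 : ℕ) : ℝ) ≤ 2*(r:ℝ)+1 := by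
      have h6 : (2*(r-j)+1 : ℕ) ≤ 2*r+1 := by omega
      calc ((2*(r-j)+1 : ℕ) : ℝ) ≤ ((2*r+1 : ℕ) : ℝ) := by exact_mod_cast h6
        _ = 2*(r:ℝ)+1 := by push_cast; ring
    have h4 : ((2*(r-j)+1 : ℕ) : ℝ) * (1/(8*(r:ℝ)+8)) ≤ (2*(r:ℝ)+1) * (1/(8*(r:ℝ)+8)) :=
      mul_le_mul_of_nonneg_right hc (le_of_lt hinv)
    have h5 : (2*(r:ℝ)+1) * (1/(8*(r:ℝ)+8)) ≤ 1/4 := by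
      rw [mul_one_div, div_le_div_iff₀ hden (by norm_num)]
      linarith
    linarith
  · intro hjr
    unfold tX tY
    have hc : ((2*(r-(j+1))+1 : ℕ) : ℝ) < ((2*(r-j) : ℕ) : ℝ) := by
      have : (2*(r-(j+1))+1 : ℕ) < 2*(r-j) := by omega
      exact_mod_cast this
    nlinarith

/-- The strict interior point of the BZ polytope. -/
def fstar (r : ℕ) (lam : ℕ → ℝ) : (ℕ → ℕ → ℝ) × (ℕ → ℕ → ℝ) :=
  (fun i j => if 1 ≤ i ∧ i ≤ j ∧ j ≤ r then
      Lam r lam (i+j-1) + tX r j * (Lam r lam (j-i+1) - Lam r lam (i+j-1)) else 0,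
   fun i j => if 1 ≤ i ∧ i ≤ j ∧ j ≤ r then
      Lam r lam (i+j) + tY r j * (Lam r lam (j-i+1) - Lam r lam (i+j)) else 0)

/-- Strictness at all non-degenerate constraints. -/
def StrictBZ (r : ℕ) (lam : ℕ → ℝ) (p : (ℕ → ℕ → ℝ) × (ℕ → ℕ → ℝ)) : Prop :=
  (∀ i j, 1 ≤ i → i ≤ j → j ≤ r → Lam r lam (i+j) < Lam r lam (j-i+1) →
    p.2 i j < p.1 i j) ∧
  (∀ i j, 1 ≤ i → i < j → j ≤ r → Lam r lam (i+j) < Lam r lam (j-i) →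
    p.2 i j < p.1 (i+1) j) ∧
  (∀ i j, 1 ≤ i → i ≤ j → j+1 ≤ r → Lam r lam (i+j) < Lam r lam (j-i+1) →
    p.1 i (j+1) < p.2 i j) ∧
  (∀ i j, 1 ≤ i → i ≤ j → j+1 ≤ r → Lam r lam (i+j+1) < Lam r lam (j-i+1) →
    p.1 (i+1) (j+1) < p.2 i j) ∧
  (∀ i, 1 ≤ i → i ≤ r → 0 < Lam r lam (r-i+1) → 0 < p.2 i r)

section FstarFacts

variable {r : ℕ} {lam : ℕ → ℝ}
variable (hr : 1 ≤ r) (hld : ∀ k, 1 ≤ k → k < r → lam (k + 1) ≤ lam k)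
  (hl0 : 0 ≤ lam r)

include hld hl0 in
lemma fstar_mem : fstar r lam ∈ BZsetBC r lam := by
  have hA := Lam_anti hld hl0
  have hN := Lam_nonneg hld hl0
  refine ⟨?_, ⟨?_, ?_, ?_, ?_⟩, ?_, ?_⟩
  · intro j h1 h2
    show (if _ then _ else 0) = lam j
    rw [if_pos ⟨le_rfl, h1, h2⟩]
    have e1 : 1 + j - 1 = j := by omega
    have e2 : j - 1 + 1 = j := by omega
    rw [e1, e2]
    have : Lam r lam j = lam j := if_pos h2
    rw [this]
    ring
  · -- c1
    intro i j h1 h2 h3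
    show (if 1 ≤ i ∧ i ≤ j ∧ j ≤ r then _ else 0) ≤ (if 1 ≤ i ∧ i ≤ j ∧ j ≤ r then _ else 0)
    rw [if_pos ⟨h1, h2, h3⟩, if_pos ⟨h1, h2, h3⟩]
    have ht := tfacts r j h3
    apply interp_le
    · exact hA (j-i+1) (i+j) (by omega) (by omega)
    · exact hA (j-i+1) (i+j-1) (by omega) (by omega)
    · exact hA (i+j-1) (i+j) (by omega) (by omega)
    · exact le_rfl
    · linarith [ht.1]
    · linarith [ht.2.2.1]
    · linarith [ht.2.1]
  · -- c2
    intro i j h1 h2 h3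
    show (if 1 ≤ i ∧ i ≤ j ∧ j ≤ r then _ else 0) ≤ (if 1 ≤ i + 1 ∧ i + 1 ≤ j ∧ j ≤ r then _ else 0)
    rw [if_pos ⟨h1, by omega, h3⟩, if_pos ⟨by omega, h2, h3⟩]
    have ht := tfacts r j h3
    have e1 : i + 1 + j - 1 = i + j := by omega
    have e2 : j - (i+1) + 1 = j - i := by omega
    rw [e1, e2]
    apply interp_le
    · exact hA (j-i+1) (i+j) (by omega) (by omega)
    · exact hA (j-i) (i+j) (by omega) (by omega)
    · exact le_rfl
    · exact hA (j-i) (j-i+1) (by omega) (by omega)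
    · linarith [ht.1]
    · linarith [ht.2.2.1]
    · linarith [ht.2.1]
  · -- c3
    intro i j h1 h2 h3
    have ht := tfacts r j (by omega)
    have ht' := ht.2.2.2 (by omega)
    have htj1 := tfacts r (j+1) h3
    constructor
    · show (if 1 ≤ i ∧ i ≤ j + 1 ∧ j + 1 ≤ r then _ else 0) ≤ (if 1 ≤ i ∧ i ≤ j ∧ j ≤ r then _ else 0)
      rw [if_pos ⟨h1, by omega, h3⟩, if_pos ⟨h1, h2, by omega⟩]
      have e1 : i + (j+1) - 1 = i + j := by omega
      have e2 : j + 1 - i + 1 = j - i + 2 := by omega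
      rw [e1, e2]
      apply interp_le
      · exact hA (j-i+2) (i+j) (by omega) (by omega)
      · exact hA (j-i+1) (i+j) (by omega) (by omega)
      · exact le_rfl
      · exact hA (j-i+1) (j-i+2) (by omega) (by omega)
      · linarith [htj1.1, htj1.2.1]
      · linarith [ht.1, ht.2.1, ht.2.2.1]
      · linarith
    · show (if 1 ≤ i + 1 ∧ i + 1 ≤ j + 1 ∧ j + 1 ≤ r then _ else 0) ≤ (if 1 ≤ i ∧ i ≤ j ∧ j ≤ r then _ else 0)
      rw [if_pos ⟨by omega, by omega, h3⟩, if_pos ⟨h1, h2, by omega⟩]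
      have e1 : i + 1 + (j+1) - 1 = i + j + 1 := by omega
      have e2 : j + 1 - (i+1) + 1 = j - i + 1 := by omega
      rw [e1, e2]
      apply interp_le
      · exact hA (j-i+1) (i+j+1) (by omega) (by omega)
      · exact hA (j-i+1) (i+j) (by omega) (by omega)
      · exact hA (i+j) (i+j+1) (by omega) (by omega)
      · exact le_rfl
      · linarith [htj1.1, htj1.2.1]
      · linarith [ht.1, ht.2.1, ht.2.2.1]
      · linarith
  · -- c4
    intro i h1 h2
    show (0:ℝ) ≤ (if _ then _ else 0)
    rw [if_pos ⟨h1, h2, le_rfl⟩]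
    have hz : Lam r lam (i + r) = 0 := by
      unfold Lam; rw [if_neg (by omega)]
    rw [hz]
    have ht := tfacts r r le_rfl
    have := hN (r - i + 1) (by omega)
    nlinarith [ht.1, ht.2.1]
  · intro i j hc
    exact if_neg hc
  · intro i j hc
    exact if_neg hc

include hld hl0 in
lemma fstar_strict : StrictBZ r lam (fstar r lam) := by
  have hA := Lam_anti hld hl0
  have hN := Lam_nonneg hld hl0
  refine ⟨?_, ?_, ?_, ?_, ?_⟩
  · intro i j h1 h2 h3 hlt
    show (if 1 ≤ i ∧ i ≤ j ∧ j ≤ r then _ else 0) < (if 1 ≤ i ∧ i ≤ j ∧ j ≤ r then _ else 0)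
    rw [if_pos ⟨h1, h2, h3⟩, if_pos ⟨h1, h2, h3⟩]
    have ht := tfacts r j h3
    apply interp_lt
    · exact hA (j-i+1) (i+j) (by omega) (by omega)
    · exact hA (j-i+1) (i+j-1) (by omega) (by omega)
    · exact hA (i+j-1) (i+j) (by omega) (by omega)
    · exact le_rfl
    · linarith [ht.1]
    · linarith [ht.2.2.1]
    · exact ht.2.1
    · linarith [ht.1, ht.2.1]
    · exact hlt
  · intro i j h1 h2 h3 hlt
    show (if 1 ≤ i ∧ i ≤ j ∧ j ≤ r then _ else 0) < (if 1 ≤ i + 1 ∧ i + 1 ≤ j ∧ j ≤ r then _ else 0)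
    rw [if_pos ⟨h1, by omega, h3⟩, if_pos ⟨by omega, h2, h3⟩]
    have ht := tfacts r j h3
    have e1 : i + 1 + j - 1 = i + j := by omega
    have e2 : j - (i+1) + 1 = j - i := by omega
    rw [e1, e2]
    apply interp_lt
    · exact hA (j-i+1) (i+j) (by omega) (by omega)
    · exact hA (j-i) (i+j) (by omega) (by omega)
    · exact le_rfl
    · exact hA (j-i) (j-i+1) (by omega) (by omega)
    · linarith [ht.1]
    · linarith [ht.2.2.1]
    · exact ht.2.1
    · linarith [ht.1, ht.2.1]
    · exact hlt
  · intro i j h1 h2 h3 hlt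
    show (if 1 ≤ i ∧ i ≤ j + 1 ∧ j + 1 ≤ r then _ else 0) < (if 1 ≤ i ∧ i ≤ j ∧ j ≤ r then _ else 0)
    rw [if_pos ⟨h1, by omega, h3⟩, if_pos ⟨h1, h2, by omega⟩]
    have ht := tfacts r j (by omega)
    have ht' := ht.2.2.2 (by omega)
    have htj1 := tfacts r (j+1) h3
    have e1 : i + (j+1) - 1 = i + j := by omega
    have e2 : j + 1 - i + 1 = j - i + 2 := by omega
    rw [e1, e2]
    apply interp_lt
    · exact hA (j-i+2) (i+j) (by omega) (by omega)
    · exact hA (j-i+1) (i+j) (by omega) (by omega)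
    · exact le_rfl
    · exact hA (j-i+1) (j-i+2) (by omega) (by omega)
    · linarith [htj1.1, htj1.2.1]
    · linarith [ht.1, ht.2.1, ht.2.2.1]
    · exact ht'
    · linarith [ht.1]
    · exact hlt
  · intro i j h1 h2 h3 hlt
    show (if 1 ≤ i + 1 ∧ i + 1 ≤ j + 1 ∧ j + 1 ≤ r then _ else 0) < (if 1 ≤ i ∧ i ≤ j ∧ j ≤ r then _ else 0)
    rw [if_pos ⟨by omega, by omega, h3⟩, if_pos ⟨h1, h2, by omega⟩]
    have ht := tfacts r j (by omega)
    have ht' := ht.2.2.2 (by omega)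
    have htj1 := tfacts r (j+1) h3
    have e1 : i + 1 + (j+1) - 1 = i + j + 1 := by omega
    have e2 : j + 1 - (i+1) + 1 = j - i + 1 := by omega
    rw [e1, e2]
    apply interp_lt
    · exact hA (j-i+1) (i+j+1) (by omega) (by omega)
    · exact hA (j-i+1) (i+j) (by omega) (by omega)
    · exact hA (i+j) (i+j+1) (by omega) (by omega)
    · exact le_rfl
    · linarith [htj1.1, htj1.2.1]
    · linarith [ht.1, ht.2.1, ht.2.2.1]
    · exact ht'
    · linarith [ht.1]
    · exact hlt
  · intro i h1 h2 hlt
    show (0:ℝ) < (if _ then _ else 0)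
    rw [if_pos ⟨h1, h2, le_rfl⟩]
    have hz : Lam r lam (i + r) = 0 := by
      unfold Lam; rw [if_neg (by omega)]
    rw [hz]
    have ht := tfacts r r le_rfl
    nlinarith [ht.1, ht.2.1]

end FstarFacts

section Bounds

variable {r : ℕ} {lam : ℕ → ℝ} {p : (ℕ → ℕ → ℝ) × (ℕ → ℕ → ℝ)}
variable (hld : ∀ k, 1 ≤ k → k < r → lam (k + 1) ≤ lam k) (hl0 : 0 ≤ lam r)

include hld hl0 in
lemma ub_bound (hmem : p ∈ BZsetBC r lam) :
    ∀ i, 1 ≤ i → ∀ j, i ≤ j → j ≤ r →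
      p.1 i j ≤ Lam r lam (j-i+1) ∧ p.2 i j ≤ Lam r lam (j-i+1) := by
  obtain ⟨htop, ⟨hc1, hc2, hc3, hc4⟩, hz1, hz2⟩ := hmem
  intro i
  induction i with
  | zero => omega
  | succ m ih =>
    intro h1 j h2 h3
    rcases Nat.eq_zero_or_pos m with hm | hm
    · subst hm
      have e1 : j - 1 + 1 = j := by omega
      have hx : p.1 1 j = lam j := htop j (by omega) h3
      have hLam : Lam r lam j = lam j := if_pos h3
      constructor
      · rw [e1, hx, hLam]
      · rw [e1, hLam, ← hx]
        exact hc1 1 j le_rfl (by omega) h3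
    · have hstep : p.1 (m+1) j ≤ p.2 m (j-1) := by
        have := (hc3 m (j-1) hm (by omega) (by omega)).2
        have e : j - 1 + 1 = j := by omega
        rwa [e] at this
      have hy : p.2 m (j-1) ≤ p.1 m (j-1) := hc1 m (j-1) hm (by omega) (by omega)
      have hub := (ih hm (j-1) (by omega) (by omega)).1
      have e2 : j - 1 - m + 1 = j - (m+1) + 1 := by omega
      rw [e2] at hub
      constructor
      · linarith
      · have := hc1 (m+1) j (by omega) h2 h3
        linarith

include hld hl0 in
lemma lb_bound (hmem : p ∈ BZsetBC r lam) :
    ∀ n i j, 1 ≤ i → i ≤ j → j ≤ r → i + (r - j) = n →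
      Lam r lam (i+j-1) ≤ p.1 i j ∧ Lam r lam (i+j) ≤ p.2 i j := by
  have hub := ub_bound hld hl0 hmem
  obtain ⟨htop, ⟨hc1, hc2, hc3, hc4⟩, hz1, hz2⟩ := hmem
  intro n
  induction n using Nat.strong_induction_on with
  | _ n ih =>
    intro i j h1 h2 h3 hn
    have hxpart : Lam r lam (i+j-1) ≤ p.1 i j := by
      rcases Nat.eq_zero_or_pos (i - 1) with hi | hi
      · have hi1 : i = 1 := by omega
        subst hi1
        have e1 : 1 + j - 1 = j := by omega
        rw [e1, htop j (by omega) h3]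
        rw [show Lam r lam j = lam j from if_pos h3]
      · obtain ⟨m, rfl⟩ : ∃ m, i = m + 1 := ⟨i - 1, by omega⟩
        have hylow : Lam r lam (m+j) ≤ p.2 m j :=
          (ih (m + (r - j)) (by omega) m j (by omega) (by omega) h3 rfl).2
        have hc := hc2 m j (by omega) (by omega) h3
        have e : m + 1 + j - 1 = m + j := by omega
        rw [e]
        linarith
    refine ⟨hxpart, ?_⟩
    rcases Nat.eq_or_lt_of_le h3 with hjr | hjr
    · have hz : Lam r lam (i + j) = 0 := by
        unfold Lam; rw [if_neg (by omega)]
      rw [hz, hjr]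
      exact hc4 i h1 (by omega)
    · have hxlow : Lam r lam (i+j) ≤ p.1 i (j+1) := by
        have := (ih (i + (r - (j+1))) (by omega) i (j+1) h1 (by omega) (by omega) rfl).1
        have e : i + (j+1) - 1 = i + j := by omega
        rwa [e] at this
      have hc := (hc3 i j h1 h2 (by omega)).1
      linarith

end Bounds

end

end BZaux

namespace BZaux

open Finset

noncomputable section

/-- The weight map as a linear map. -/
def Lwt (r : ℕ) : ((ℕ → ℕ → ℝ) × (ℕ → ℕ → ℝ)) →ₗ[ℝ] (Fin r → ℝ) where
  toFun p := fun k => wtBC r p ((k : ℕ) + 1)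
  map_add' p q := by
    funext k
    simp only [wtBC, Prod.fst_add, Prod.snd_add, Pi.add_apply, Finset.sum_add_distrib]
    ring
  map_smul' a p := by
    funext k
    simp only [wtBC, Prod.smul_fst, Prod.smul_snd, Pi.smul_apply, smul_eq_mul,
      RingHom.id_apply, ← Finset.mul_sum]
    ring

lemma BZ_convex (r : ℕ) (lam : ℕ → ℝ) : Convex ℝ (BZsetBC r lam) := by
  intro p hp q hq a b ha hb hab
  obtain ⟨ptop, ⟨pc1, pc2, pc3, pc4⟩, pz1, pz2⟩ := hp
  obtain ⟨qtop, ⟨qc1, qc2, qc3, qc4⟩, qz1, qz2⟩ := hq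
  have hval1 : ∀ i j, (a • p + b • q).1 i j = a * p.1 i j + b * q.1 i j := by
    intro i j; rfl
  have hval2 : ∀ i j, (a • p + b • q).2 i j = a * p.2 i j + b * q.2 i j := by
    intro i j; rfl
  refine ⟨?_, ⟨?_, ?_, ?_, ?_⟩, ?_, ?_⟩
  · intro j h1 h2
    rw [hval1, ptop j h1 h2, qtop j h1 h2]
    calc a * lam j + b * lam j = (a + b) * lam j := by ring
      _ = lam j := by rw [hab]; ring
  · intro i j h1 h2 h3
    rw [hval1, hval2]
    exact add_le_add (mul_le_mul_of_nonneg_left (pc1 i j h1 h2 h3) ha)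
      (mul_le_mul_of_nonneg_left (qc1 i j h1 h2 h3) hb)
  · intro i j h1 h2 h3
    rw [hval1, hval2]
    exact add_le_add (mul_le_mul_of_nonneg_left (pc2 i j h1 h2 h3) ha)
      (mul_le_mul_of_nonneg_left (qc2 i j h1 h2 h3) hb)
  · intro i j h1 h2 h3
    constructor
    · rw [hval1, hval2]
      exact add_le_add (mul_le_mul_of_nonneg_left (pc3 i j h1 h2 h3).1 ha)
        (mul_le_mul_of_nonneg_left (qc3 i j h1 h2 h3).1 hb)
    · rw [hval1, hval2]
      exact add_le_add (mul_le_mul_of_nonneg_left (pc3 i j h1 h2 h3).2 ha)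
        (mul_le_mul_of_nonneg_left (qc3 i j h1 h2 h3).2 hb)
  · intro i h1 h2
    rw [hval2]
    have := mul_le_mul_of_nonneg_left (pc4 i h1 h2) ha
    have := mul_le_mul_of_nonneg_left (qc4 i h1 h2) hb
    nlinarith [pc4 i h1 h2, qc4 i h1 h2]
  · intro i j hc
    rw [hval1, pz1 i j hc, qz1 i j hc]; ring
  · intro i j hc
    rw [hval2, pz2 i j hc, qz2 i j hc]; ring

lemma wt_add (r : ℕ) (p q : (ℕ → ℕ → ℝ) × (ℕ → ℕ → ℝ)) (i : ℕ) :
    wtBC r (p + q) i = wtBC r p i + wtBC r q i := by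
  simp only [wtBC, Prod.fst_add, Prod.snd_add, Pi.add_apply, Finset.sum_add_distrib]
  ring

lemma wt_smul (r : ℕ) (a : ℝ) (p : (ℕ → ℕ → ℝ) × (ℕ → ℕ → ℝ)) (i : ℕ) :
    wtBC r (a • p) i = a * wtBC r p i := by
  simp only [wtBC, Prod.smul_fst, Prod.smul_snd, Pi.smul_apply, smul_eq_mul,
    ← Finset.mul_sum]
  ring

lemma wt_combo (r : ℕ) {ι : Type*} (t : Finset ι) (w : ι → ℝ)
    (z : ι → ((ℕ → ℕ → ℝ) × (ℕ → ℕ → ℝ))) (i : ℕ) :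
    wtBC r (∑ k ∈ t, w k • z k) i = ∑ k ∈ t, w k * wtBC r (z k) i := by
  induction t using Finset.cons_induction with
  | empty => simp [wtBC]
  | cons a t ha ih => rw [Finset.sum_cons, Finset.sum_cons, wt_add, wt_smul, ih]

end

end BZaux

namespace BZaux

open Finset

noncomputable section

lemma fst_sum {ι : Type*} (t : Finset ι) (z : ι → ((ℕ → ℕ → ℝ) × (ℕ → ℕ → ℝ)))
    (i j : ℕ) (w : ι → ℝ) :
    (∑ x ∈ t, w x • z x).1 i j = ∑ x ∈ t, w x * (z x).1 i j := by
  induction t using Finset.cons_induction with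
  | empty => rfl
  | cons a t ha ih =>
    rw [Finset.sum_cons, Finset.sum_cons, Prod.fst_add, Pi.add_apply, Pi.add_apply, ih]
    rfl

lemma snd_sum {ι : Type*} (t : Finset ι) (z : ι → ((ℕ → ℕ → ℝ) × (ℕ → ℕ → ℝ)))
    (i j : ℕ) (w : ι → ℝ) :
    (∑ x ∈ t, w x • z x).2 i j = ∑ x ∈ t, w x * (z x).2 i j := by
  induction t using Finset.cons_induction with
  | empty => rfl
  | cons a t ha ih =>
    rw [Finset.sum_cons, Finset.sum_cons, Prod.snd_add, Pi.add_apply, Pi.add_apply, ih]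
    rfl

section StrictFiber

variable {r : ℕ} {lam mu : ℕ → ℝ}

lemma strict_fiber_point (hr : 1 ≤ r)
    (hld : ∀ k, 1 ≤ k → k < r → lam (k + 1) ≤ lam k) (hl0 : 0 ≤ lam r)
    (hmd : ∀ k, 1 ≤ k → k < r → mu (k + 1) ≤ mu k) (hm0 : 0 ≤ mu r)
    (hDpos : ∀ j, 1 ≤ j → j ≤ r → 1 ≤ ∑ k ∈ Icc 1 j, (lam k - mu k)) :
    ∃ q, q ∈ BZsetBC r lam ∧ (∀ i, 1 ≤ i → i ≤ r → wtBC r q i = mu i) ∧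
      StrictBZ r lam q := by
  have hconv := BZ_convex r lam
  have hr0 : (0:ℝ) < (r:ℝ) := by exact_mod_cast hr
  set ep : ℝ := 1 / 2^r with hep
  have hep0 : 0 < ep := by positivity
  have heppow : (2:ℝ)^r * ep ≤ 1 := by
    rw [hep, mul_one_div, div_le_one (by positivity)]
  have HP : ∀ s : ℝ, |s| = ep → ∀ i0 : ℕ, ∃ p, 1 ≤ i0 → i0 ≤ r →
      p ∈ BZsetBC r lam ∧ ∀ k, 1 ≤ k → k ≤ r →
        wtBC r p k = mu k + (if k = i0 then s else 0) := by
    intro s hs i0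
    by_cases h : 1 ≤ i0 ∧ i0 ≤ r
    · obtain ⟨p, hmem, hw⟩ := EX r lam mu (fun k => mu k + (if k = i0 then s else 0)) 1 ep
        one_pos (le_of_lt hep0) heppow hld (fun _ => hl0) hmd (fun _ => hm0) hDpos
        (by intro k h1 h2
            simp only [add_sub_cancel_left]
            by_cases hk : k = i0
            · rw [if_pos hk]; exact le_of_eq hs
            · rw [if_neg hk]; simpa using le_of_lt hep0)
      exact ⟨p, fun _ _ => ⟨hmem, hw⟩⟩
    · exact ⟨(fun _ _ => 0, fun _ _ => 0), fun h1 h2 => absurd ⟨h1, h2⟩ h⟩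
  choose gP hgP using HP ep (abs_of_pos hep0)
  choose gM hgM using HP (-ep) (by rw [abs_neg, abs_of_pos hep0])
  have hfmem := fstar_mem hld hl0
  have hfstr := fstar_strict hld hl0
  set nus : ℕ → ℝ := fun i => wtBC r (fstar r lam) i with hnus
  set C : ℝ := (∑ i ∈ Icc 1 r, |mu i - nus i|) + 1 with hC
  have hsum0 : 0 ≤ ∑ i ∈ Icc 1 r, |mu i - nus i| :=
    Finset.sum_nonneg (fun i _ => abs_nonneg _)
  have hC1 : (0:ℝ) < C := by rw [hC]; linarith
  have hCi : ∀ i, i ∈ Icc 1 r → |mu i - nus i| + 1 ≤ C := by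
    intro i hi
    have := Finset.single_le_sum (f := fun i => |mu i - nus i|)
      (fun k _ => abs_nonneg _) hi
    rw [hC]; linarith
  have hden : 0 < ep + r * C := by positivity
  set th : ℝ := ep / (ep + r * C) with hth
  have hth0 : 0 < th := div_pos hep0 hden
  have hth1 : th < 1 := by
    rw [hth, div_lt_one hden]
    nlinarith [mul_pos hr0 hC1]
  set sc : ℕ → ℝ := fun i => th * (mu i - nus i) / ep with hsc
  set u : ℝ := (1 - th) / (2 * (r:ℝ)) with hu
  have h2u : 2 * u = (1 - th) / r := by rw [hu]; field_simp
  set wP : ℕ → ℝ := fun i => u + sc i / 2 with hwP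
  set wM : ℕ → ℝ := fun i => u - sc i / 2 with hwM
  have hscb : ∀ i, i ∈ Icc 1 r → |sc i| ≤ 2 * u := by
    intro i hi
    have hsi : sc i = (mu i - nus i) / (ep + r * C) := by
      rw [hsc, hth]; field_simp
    have h1mth : (1 - th) / r = C / (ep + r * C) := by
      rw [hth]; field_simp; ring
    rw [h2u, hsi, h1mth, abs_div, abs_of_pos hden]
    exact (div_le_div_iff_of_pos_right hden).mpr (by linarith [hCi i hi])
  have hwP0 : ∀ i, i ∈ Icc 1 r → 0 ≤ wP i := by
    intro i hi
    have h := abs_le.mp (hscb i hi)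
    rw [hwP]; dsimp only; linarith [h.1]
  have hwM0 : ∀ i, i ∈ Icc 1 r → 0 ≤ wM i := by
    intro i hi
    have h := abs_le.mp (hscb i hi)
    rw [hwM]; dsimp only; linarith [h.2]
  set t : Finset (ℕ × Bool) := (Icc 1 r) ×ˢ (Finset.univ : Finset Bool) with hts
  set W : ℕ × Bool → ℝ := fun x => if x.2 then wP x.1 else wM x.1 with hWd
  set z : ℕ × Bool → ((ℕ→ℕ→ℝ)×(ℕ→ℕ→ℝ)) := fun x => if x.2 then gP x.1 else gM x.1 with hzd
  have hW0 : ∀ x ∈ t, 0 ≤ W x := by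
    rintro ⟨i, b⟩ hx
    rw [hts, Finset.mem_product] at hx
    cases b
    · simpa [hWd] using hwM0 i hx.1
    · simpa [hWd] using hwP0 i hx.1
  have hzmem : ∀ x ∈ t, z x ∈ BZsetBC r lam := by
    rintro ⟨i, b⟩ hx
    rw [hts, Finset.mem_product] at hx
    have hi := Finset.mem_Icc.mp hx.1
    cases b
    · simpa [hzd] using (hgM i hi.1 hi.2).1
    · simpa [hzd] using (hgP i hi.1 hi.2).1
  have hzwt : ∀ (i' : ℕ) (b : Bool), i' ∈ Icc 1 r → ∀ k, 1 ≤ k → k ≤ r →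
      wtBC r (z (i', b)) k = mu k + (if k = i' then (if b then ep else -ep) else 0) := by
    intro i' b hi k h1 h2
    have hi' := Finset.mem_Icc.mp hi
    cases b
    · simpa [hzd] using (hgM i' hi'.1 hi'.2).2 k h1 h2
    · simpa [hzd] using (hgP i' hi'.1 hi'.2).2 k h1 h2
  have hWsum : ∑ x ∈ t, W x = 1 - th := by
    rw [hts, Finset.sum_product]
    have hrow : ∀ i ∈ Icc 1 r, (∑ b : Bool, W (i, b)) = 2 * u := by
      intro i hi
      rw [Fintype.sum_bool]
      show wP i + wM i = 2 * u
      rw [hwP, hwM]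
      dsimp only
      ring
    rw [Finset.sum_congr rfl hrow, Finset.sum_const, Nat.card_Icc]
    simp only [nsmul_eq_mul]
    have hcast : ((r + 1 - 1 : ℕ) : ℝ) = (r : ℝ) := by norm_num
    rw [hcast, h2u]
    field_simp
  set q : (ℕ→ℕ→ℝ)×(ℕ→ℕ→ℝ) := th • fstar r lam + ∑ x ∈ t, W x • z x with hq
  have h1th : (0:ℝ) < 1 - th := by linarith
  have hGmem : (∑ x ∈ t, ((1/(1-th)) * W x) • z x) ∈ BZsetBC r lam := by
    apply hconv.sum_mem
    · intro x hx
      exact mul_nonneg (div_nonneg (by norm_num) (by linarith)) (hW0 x hx)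
    · rw [← Finset.mul_sum, hWsum]; field_simp
    · exact hzmem
  have hqmem : q ∈ BZsetBC r lam := by
    have h1 : q = th • fstar r lam
        + (1 - th) • (∑ x ∈ t, ((1/(1-th)) * W x) • z x) := by
      rw [hq, Finset.smul_sum]
      congr 1
      apply Finset.sum_congr rfl
      intro x hx
      rw [smul_smul]
      congr 1
      field_simp
    rw [h1]
    exact hconv hfmem hGmem (le_of_lt hth0) (by linarith) (by ring)
  have hqwt : ∀ i, 1 ≤ i → i ≤ r → wtBC r q i = mu i := by
    intro i h1 h2
    rw [hq, wt_add, wt_smul, wt_combo]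
    have hterm : ∀ x ∈ t, W x * wtBC r (z x) i
        = W x * mu i + (if i = x.1 then (if x.2 then wP x.1 else wM x.1) * (if x.2 then ep else -ep) else 0) := by
      rintro ⟨i', b⟩ hx
      rw [hts, Finset.mem_product] at hx
      rw [hzwt i' b hx.1 i h1 h2]
      show W (i', b) * (mu i + (if i = i' then (if b then ep else -ep) else 0))
          = W (i', b) * mu i + (if i = i' then (if b then wP i' else wM i') * (if b then ep else -ep) else 0)
      by_cases hii : i = i'
      · rw [if_pos hii, if_pos hii]
        cases b
        · show W (i', false) * (mu i + -ep) = W (i', false) * mu i + wM i' * -ep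
          have : W (i', false) = wM i' := rfl
          rw [this]; ring
        · show W (i', true) * (mu i + ep) = W (i', true) * mu i + wP i' * ep
          have : W (i', true) = wP i' := rfl
          rw [this]; ring
      · rw [if_neg hii, if_neg hii]; ring
    rw [Finset.sum_congr rfl hterm, Finset.sum_add_distrib, ← Finset.sum_mul, hWsum]
    have hsum2 : (∑ x ∈ t, (if i = x.1 then (if x.2 then wP x.1 else wM x.1) * (if x.2 then ep else -ep) else 0)) = sc i * ep := by
      rw [hts, Finset.sum_product]
      have hinner : ∀ i' ∈ Icc 1 r, (∑ b : Bool, if i = i' then (if b then wP i' else wM i') * (if b then ep else -ep) else 0) = if i = i' then sc i' * ep else 0 := by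
        intro i' hi'
        rw [Fintype.sum_bool]
        show (if i = i' then wP i' * ep else 0) + (if i = i' then wM i' * (-ep) else 0)
            = if i = i' then sc i' * ep else 0
        by_cases hii : i = i'
        · rw [if_pos hii, if_pos hii, if_pos hii, hwP, hwM]
          dsimp only
          ring
        · rw [if_neg hii, if_neg hii, if_neg hii]; ring
      rw [Finset.sum_congr rfl hinner,
        Finset.sum_ite_eq (Icc 1 r) i (fun i' => sc i' * ep),
        if_pos (Finset.mem_Icc.mpr ⟨h1, h2⟩)]
    rw [hsum2]
    have hsep : sc i * ep = th * (mu i - nus i) := by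
      rw [hsc]; dsimp only; field_simp
    rw [hsep]
    have hnusi : wtBC r (fstar r lam) i = nus i := rfl
    rw [hnusi]; ring
  have hcomp1 : ∀ i j, q.1 i j = th * (fstar r lam).1 i j + ∑ x ∈ t, W x * (z x).1 i j := by
    intro i j
    rw [hq]
    simp only [Prod.fst_add, Prod.smul_fst, Pi.add_apply, Pi.smul_apply, smul_eq_mul]
    rw [fst_sum]
  have hcomp2 : ∀ i j, q.2 i j = th * (fstar r lam).2 i j + ∑ x ∈ t, W x * (z x).2 i j := by
    intro i j
    rw [hq]
    simp only [Prod.snd_add, Prod.smul_snd, Pi.add_apply, Pi.smul_apply, smul_eq_mul]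
    rw [snd_sum]
  refine ⟨q, hqmem, hqwt, ?_, ?_, ?_, ?_, ?_⟩
  · intro i j h1 h2 h3 hlt
    have hf := hfstr.1 i j h1 h2 h3 hlt
    have hsumge : ∑ x ∈ t, W x * (z x).2 i j ≤ ∑ x ∈ t, W x * (z x).1 i j := by
      apply Finset.sum_le_sum
      intro x hx
      obtain ⟨-, ⟨zc1, -, -, -⟩, -, -⟩ := hzmem x hx
      exact mul_le_mul_of_nonneg_left (zc1 i j h1 h2 h3) (hW0 x hx)
    have e1 := hcomp1 i j; have e2 := hcomp2 i j
    have hp := mul_pos hth0 (sub_pos.mpr hf)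
    linarith
  · intro i j h1 h2 h3 hlt
    have hf := hfstr.2.1 i j h1 h2 h3 hlt
    have hsumge : ∑ x ∈ t, W x * (z x).2 i j ≤ ∑ x ∈ t, W x * (z x).1 (i+1) j := by
      apply Finset.sum_le_sum
      intro x hx
      obtain ⟨-, ⟨-, zc2, -, -⟩, -, -⟩ := hzmem x hx
      exact mul_le_mul_of_nonneg_left (zc2 i j h1 h2 h3) (hW0 x hx)
    have e1 := hcomp1 (i+1) j; have e2 := hcomp2 i j
    have hp := mul_pos hth0 (sub_pos.mpr hf)
    linarith
  · intro i j h1 h2 h3 hlt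
    have hf := hfstr.2.2.1 i j h1 h2 h3 hlt
    have hsumge : ∑ x ∈ t, W x * (z x).1 i (j+1) ≤ ∑ x ∈ t, W x * (z x).2 i j := by
      apply Finset.sum_le_sum
      intro x hx
      obtain ⟨-, ⟨-, -, zc3, -⟩, -, -⟩ := hzmem x hx
      exact mul_le_mul_of_nonneg_left (zc3 i j h1 h2 h3).1 (hW0 x hx)
    have e1 := hcomp1 i (j+1); have e2 := hcomp2 i j
    have hp := mul_pos hth0 (sub_pos.mpr hf)
    linarith
  · intro i j h1 h2 h3 hlt
    have hf := hfstr.2.2.2.1 i j h1 h2 h3 hlt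
    have hsumge : ∑ x ∈ t, W x * (z x).1 (i+1) (j+1) ≤ ∑ x ∈ t, W x * (z x).2 i j := by
      apply Finset.sum_le_sum
      intro x hx
      obtain ⟨-, ⟨-, -, zc3, -⟩, -, -⟩ := hzmem x hx
      exact mul_le_mul_of_nonneg_left (zc3 i j h1 h2 h3).2 (hW0 x hx)
    have e1 := hcomp1 (i+1) (j+1); have e2 := hcomp2 i j
    have hp := mul_pos hth0 (sub_pos.mpr hf)
    linarith
  · intro i h1 h2 hlt
    have hf := hfstr.2.2.2.2 i h1 h2 hlt
    have hsumge : 0 ≤ ∑ x ∈ t, W x * (z x).2 i r := by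
      apply Finset.sum_nonneg
      intro x hx
      obtain ⟨-, ⟨-, -, -, zc4⟩, -, -⟩ := hzmem x hx
      exact mul_nonneg (hW0 x hx) (zc4 i h1 h2)
    have e2 := hcomp2 i r
    have hp := mul_pos hth0 hf
    linarith

end StrictFiber

end

end BZaux

namespace BZaux

open Finset

noncomputable section

open scoped Classical

/-- The subspace of directions supported on non-degenerate coordinates. -/
def Vsub (r : ℕ) (lam : ℕ → ℝ) : Submodule ℝ ((ℕ → ℕ → ℝ) × (ℕ → ℕ → ℝ)) where
  carrier := {p |
    (∀ i j, (¬(1 ≤ i ∧ i ≤ j ∧ j ≤ r) ∨ Lam r lam (j-i+1) ≤ Lam r lam (i+j-1)) →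
      p.1 i j = 0) ∧
    (∀ i j, (¬(1 ≤ i ∧ i ≤ j ∧ j ≤ r) ∨ Lam r lam (j-i+1) ≤ Lam r lam (i+j)) →
      p.2 i j = 0)}
  add_mem' := by
    rintro p q ⟨hp1, hp2⟩ ⟨hq1, hq2⟩
    constructor
    · intro i j h
      show p.1 i j + q.1 i j = 0
      rw [hp1 i j h, hq1 i j h]; ring
    · intro i j h
      show p.2 i j + q.2 i j = 0
      rw [hp2 i j h, hq2 i j h]; ring
  zero_mem' := ⟨fun _ _ _ => rfl, fun _ _ _ => rfl⟩
  smul_mem' := by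
    rintro a p ⟨hp1, hp2⟩
    constructor
    · intro i j h
      show a * p.1 i j = 0
      rw [hp1 i j h]; ring
    · intro i j h
      show a * p.2 i j = 0
      rw [hp2 i j h]; ring

section Span

variable {r : ℕ} {lam : ℕ → ℝ} {p : (ℕ → ℕ → ℝ) × (ℕ → ℕ → ℝ)}
variable (hld : ∀ k, 1 ≤ k → k < r → lam (k + 1) ≤ lam k) (hl0 : 0 ≤ lam r)

include hld hl0 in
lemma collapsed_x (hmem : p ∈ BZsetBC r lam) (i j : ℕ) (h1 : 1 ≤ i) (h2 : i ≤ j)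
    (h3 : j ≤ r) (hc : Lam r lam (j-i+1) ≤ Lam r lam (i+j-1)) :
    p.1 i j = Lam r lam (i+j-1) := by
  have hub := (ub_bound hld hl0 hmem i h1 j h2 h3).1
  have hlb := (lb_bound hld hl0 hmem (i + (r - j)) i j h1 h2 h3 rfl).1
  linarith

include hld hl0 in
lemma collapsed_y (hmem : p ∈ BZsetBC r lam) (i j : ℕ) (h1 : 1 ≤ i) (h2 : i ≤ j)
    (h3 : j ≤ r) (hc : Lam r lam (j-i+1) ≤ Lam r lam (i+j)) :
    p.2 i j = Lam r lam (i+j) := by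
  have hub := (ub_bound hld hl0 hmem i h1 j h2 h3).2
  have hlb := (lb_bound hld hl0 hmem (i + (r - j)) i j h1 h2 h3 rfl).2
  linarith

include hld hl0 in
lemma diff_mem_V {q : (ℕ → ℕ → ℝ) × (ℕ → ℕ → ℝ)} (hp : p ∈ BZsetBC r lam)
    (hq : q ∈ BZsetBC r lam) : p - q ∈ Vsub r lam := by
  have hA := Lam_anti hld hl0
  constructor
  · intro i j h
    show p.1 i j - q.1 i j = 0
    rcases h with h | h
    · rw [hp.2.2.1 i j h, hq.2.2.1 i j h]; ring
    · by_cases ht : 1 ≤ i ∧ i ≤ j ∧ j ≤ r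
      · rw [collapsed_x hld hl0 hp i j ht.1 ht.2.1 ht.2.2 h,
          collapsed_x hld hl0 hq i j ht.1 ht.2.1 ht.2.2 h]
        ring
      · rw [hp.2.2.1 i j ht, hq.2.2.1 i j ht]; ring
  · intro i j h
    show p.2 i j - q.2 i j = 0
    rcases h with h | h
    · rw [hp.2.2.2 i j h, hq.2.2.2 i j h]; ring
    · by_cases ht : 1 ≤ i ∧ i ≤ j ∧ j ≤ r
      · rw [collapsed_y hld hl0 hp i j ht.1 ht.2.1 ht.2.2 h,
          collapsed_y hld hl0 hq i j ht.1 ht.2.1 ht.2.2 h]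
        ring
      · rw [hp.2.2.2 i j ht, hq.2.2.2 i j ht]; ring

include hld hl0 in
lemma span_le_V : vectorSpan ℝ (BZsetBC r lam) ≤ Vsub r lam := by
  rw [vectorSpan_def, Submodule.span_le]
  rintro v ⟨p, hp, q, hq, rfl⟩
  exact diff_mem_V hld hl0 hp hq

include hld hl0 in
/-- Perturbation at a strict point stays in the polytope. -/
lemma perturb (hr : 1 ≤ r) {q0 : (ℕ → ℕ → ℝ) × (ℕ → ℕ → ℝ)}
    (hq0 : q0 ∈ BZsetBC r lam) (hstr : StrictBZ r lam q0)
    {v : (ℕ → ℕ → ℝ) × (ℕ → ℕ → ℝ)} (hv : v ∈ Vsub r lam) :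
    ∃ t : ℝ, 0 < t ∧ ∀ s : ℝ, |s| ≤ t → q0 + s • v ∈ BZsetBC r lam := by
  classical
  have hA := Lam_anti hld hl0
  have hN := Lam_nonneg hld hl0
  obtain ⟨hv1, hv2⟩ := hv
  obtain ⟨htop, ⟨hc1, hc2, hc3, hc4⟩, hz1, hz2⟩ := hq0
  -- bound on v
  set M : ℝ := (∑ i ∈ Icc 1 r, ∑ j ∈ Icc 1 r, (|v.1 i j| + |v.2 i j|)) + 1 with hM
  have hsum_nonneg : (0:ℝ) ≤ ∑ i ∈ Icc 1 r, ∑ j ∈ Icc 1 r, (|v.1 i j| + |v.2 i j|) :=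
    Finset.sum_nonneg fun i _ => Finset.sum_nonneg fun j _ => by positivity
  have hM1 : (1:ℝ) ≤ M := by rw [hM]; linarith
  have hMv : ∀ i j, 1 ≤ i → i ≤ j → j ≤ r → |v.1 i j| ≤ M - 1 ∧ |v.2 i j| ≤ M - 1 := by
    intro i j h1 h2 h3
    have hi : i ∈ Icc 1 r := mem_Icc.mpr ⟨h1, by omega⟩
    have hj : j ∈ Icc 1 r := mem_Icc.mpr ⟨by omega, h3⟩
    have hrow := Finset.single_le_sum
      (f := fun i => ∑ j ∈ Icc 1 r, (|v.1 i j| + |v.2 i j|))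
      (fun k _ => Finset.sum_nonneg fun j _ => by positivity) hi
    have hcol := Finset.single_le_sum (f := fun j => |v.1 i j| + |v.2 i j|)
      (fun k _ => by positivity) hj
    constructor
    · have h5 : |v.1 i j| ≤ |v.1 i j| + |v.2 i j| := by
        linarith [abs_nonneg (v.2 i j)]
      rw [hM]; linarith
    · have h5 : |v.2 i j| ≤ |v.1 i j| + |v.2 i j| := by
        linarith [abs_nonneg (v.1 i j)]
      rw [hM]; linarith
  -- the slack function
  set sfun : ℕ × ℕ → ℝ := fun x =>
    min (min
      (if 1 ≤ x.1 ∧ x.1 ≤ x.2 ∧ x.2 ≤ r ∧ Lam r lam (x.1+x.2) < Lam r lam (x.2-x.1+1)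
        then q0.1 x.1 x.2 - q0.2 x.1 x.2 else 1)
      (if 1 ≤ x.1 ∧ x.1 < x.2 ∧ x.2 ≤ r ∧ Lam r lam (x.1+x.2) < Lam r lam (x.2-x.1)
        then q0.1 (x.1+1) x.2 - q0.2 x.1 x.2 else 1))
    (min (min
      (if 1 ≤ x.1 ∧ x.1 ≤ x.2 ∧ x.2+1 ≤ r ∧ Lam r lam (x.1+x.2) < Lam r lam (x.2-x.1+1)
        then q0.2 x.1 x.2 - q0.1 x.1 (x.2+1) else 1)
      (if 1 ≤ x.1 ∧ x.1 ≤ x.2 ∧ x.2+1 ≤ r ∧ Lam r lam (x.1+x.2+1) < Lam r lam (x.2-x.1+1)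
        then q0.2 x.1 x.2 - q0.1 (x.1+1) (x.2+1) else 1))
      (if 1 ≤ x.1 ∧ x.1 ≤ r ∧ x.2 = r ∧ 0 < Lam r lam (r-x.1+1)
        then q0.2 x.1 r else 1)) with hsfun
  have hE : ((Icc 1 r) ×ˢ (Icc 1 r)).Nonempty :=
    ⟨(1,1), Finset.mem_product.mpr ⟨mem_Icc.mpr ⟨le_rfl, hr⟩, mem_Icc.mpr ⟨le_rfl, hr⟩⟩⟩
  set dl : ℝ := Finset.inf' _ hE sfun with hdl
  have hdlpos : 0 < dl := by
    rw [hdl, Finset.lt_inf'_iff]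
    rintro ⟨i, j⟩ -
    rw [hsfun]
    dsimp only
    refine lt_min (lt_min ?_ ?_) (lt_min (lt_min ?_ ?_) ?_)
    · by_cases h : 1 ≤ i ∧ i ≤ j ∧ j ≤ r ∧ Lam r lam (i+j) < Lam r lam (j-i+1)
      · rw [if_pos h]
        have := hstr.1 i j h.1 h.2.1 h.2.2.1 h.2.2.2
        linarith
      · rw [if_neg h]; norm_num
    · by_cases h : 1 ≤ i ∧ i < j ∧ j ≤ r ∧ Lam r lam (i+j) < Lam r lam (j-i)
      · rw [if_pos h]
        have := hstr.2.1 i j h.1 h.2.1 h.2.2.1 h.2.2.2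
        linarith
      · rw [if_neg h]; norm_num
    · by_cases h : 1 ≤ i ∧ i ≤ j ∧ j+1 ≤ r ∧ Lam r lam (i+j) < Lam r lam (j-i+1)
      · rw [if_pos h]
        have := hstr.2.2.1 i j h.1 h.2.1 h.2.2.1 h.2.2.2
        linarith
      · rw [if_neg h]; norm_num
    · by_cases h : 1 ≤ i ∧ i ≤ j ∧ j+1 ≤ r ∧ Lam r lam (i+j+1) < Lam r lam (j-i+1)
      · rw [if_pos h]
        have := hstr.2.2.2.1 i j h.1 h.2.1 h.2.2.1 h.2.2.2
        linarith
      · rw [if_neg h]; norm_num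
    · by_cases h : 1 ≤ i ∧ i ≤ r ∧ j = r ∧ 0 < Lam r lam (r-i+1)
      · rw [if_pos h]
        exact hstr.2.2.2.2 i h.1 h.2.1 h.2.2.2
      · rw [if_neg h]; norm_num
  have hdle : ∀ i j, 1 ≤ i → i ≤ r → 1 ≤ j → j ≤ r → dl ≤ sfun (i, j) := by
    intro i j h1 h2 h3 h4
    exact Finset.inf'_le _ (Finset.mem_product.mpr
      ⟨mem_Icc.mpr ⟨h1, h2⟩, mem_Icc.mpr ⟨h3, h4⟩⟩)
  refine ⟨dl / (2 * M), by positivity, ?_⟩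
  intro s hs
  have hsM : ∀ a b : ℝ, |a| ≤ M - 1 → |b| ≤ M - 1 → s * a - s * b ≤ dl := by
    intro a b ha hb
    have h1 := abs_le.mp ha
    have h2 := abs_le.mp hb
    have h3 := abs_le.mp hs
    have hM0 : (0:ℝ) < M := by linarith
    have key : s * a - s * b ≤ |s| * (|a| + |b|) := by
      have := abs_sub_abs_le_abs_sub (s * a) (s * b)
      have h5 : s * a - s * b ≤ |s * a - s * b| := le_abs_self _
      have h6 : |s * a - s * b| = |s * (a - b)| := by ring_nf
      have h7 : |s * (a - b)| = |s| * |a - b| := abs_mul _ _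
      have h8 : |a - b| ≤ |a| + |b| := abs_sub _ _
      calc s * a - s * b ≤ |s * a - s * b| := h5
        _ = |s| * |a - b| := by rw [h6, h7]
        _ ≤ |s| * (|a| + |b|) := by
            apply mul_le_mul_of_nonneg_left h8 (abs_nonneg _)
    have h9 : |s| * (|a| + |b|) ≤ (dl/(2*M)) * (2*(M-1)) := by
      apply mul_le_mul hs (by linarith) (by positivity) (div_nonneg hdlpos.le (by linarith))
    have h10 : (dl/(2*M)) * (2*(M-1)) ≤ dl := by
      rw [div_mul_eq_mul_div, div_le_iff₀ (by linarith : (0:ℝ) < 2*M)]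
      nlinarith
    linarith
  have hs1 : ∀ i j, 1 ≤ i → i ≤ r → 1 ≤ j → j ≤ r → dl ≤
      (if 1 ≤ i ∧ i ≤ j ∧ j ≤ r ∧ Lam r lam (i+j) < Lam r lam (j-i+1)
        then q0.1 i j - q0.2 i j else 1) := by
    intro i j h1 h2 h3 h4
    refine le_trans (hdle i j h1 h2 h3 h4) ?_
    rw [hsfun]; dsimp only
    exact le_trans (min_le_left _ _) (min_le_left _ _)
  have hs2 : ∀ i j, 1 ≤ i → i ≤ r → 1 ≤ j → j ≤ r → dl ≤
      (if 1 ≤ i ∧ i < j ∧ j ≤ r ∧ Lam r lam (i+j) < Lam r lam (j-i)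
        then q0.1 (i+1) j - q0.2 i j else 1) := by
    intro i j h1 h2 h3 h4
    refine le_trans (hdle i j h1 h2 h3 h4) ?_
    rw [hsfun]; dsimp only
    exact le_trans (min_le_left _ _) (min_le_right _ _)
  have hs3 : ∀ i j, 1 ≤ i → i ≤ r → 1 ≤ j → j ≤ r → dl ≤
      (if 1 ≤ i ∧ i ≤ j ∧ j+1 ≤ r ∧ Lam r lam (i+j) < Lam r lam (j-i+1)
        then q0.2 i j - q0.1 i (j+1) else 1) := by
    intro i j h1 h2 h3 h4
    refine le_trans (hdle i j h1 h2 h3 h4) ?_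
    rw [hsfun]; dsimp only
    exact le_trans (min_le_right _ _) (le_trans (min_le_left _ _) (min_le_left _ _))
  have hs4 : ∀ i j, 1 ≤ i → i ≤ r → 1 ≤ j → j ≤ r → dl ≤
      (if 1 ≤ i ∧ i ≤ j ∧ j+1 ≤ r ∧ Lam r lam (i+j+1) < Lam r lam (j-i+1)
        then q0.2 i j - q0.1 (i+1) (j+1) else 1) := by
    intro i j h1 h2 h3 h4
    refine le_trans (hdle i j h1 h2 h3 h4) ?_
    rw [hsfun]; dsimp only
    exact le_trans (min_le_right _ _) (le_trans (min_le_left _ _) (min_le_right _ _))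
  have hs5 : ∀ i, 1 ≤ i → i ≤ r → dl ≤
      (if 1 ≤ i ∧ i ≤ r ∧ r = r ∧ 0 < Lam r lam (r-i+1)
        then q0.2 i r else 1) := by
    intro i h1 h2
    refine le_trans (hdle i r h1 h2 (by omega) le_rfl) ?_
    rw [hsfun]; dsimp only
    exact le_trans (min_le_right _ _) (min_le_right _ _)
  have hval1 : ∀ i j, (q0 + s • v).1 i j = q0.1 i j + s * v.1 i j := fun i j => rfl
  have hval2 : ∀ i j, (q0 + s • v).2 i j = q0.2 i j + s * v.2 i j := fun i j => rfl
  refine ⟨?_, ⟨?_, ?_, ?_, ?_⟩, ?_, ?_⟩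
  · intro j h1 h2
    rw [hval1, htop j h1 h2, hv1 1 j (Or.inr (by
      have e1 : j - 1 + 1 = j := by omega
      have e2 : 1 + j - 1 = j := by omega
      rw [e1, e2]))]
    ring
  · -- c1
    intro i j h1 h2 h3
    rw [hval1, hval2]
    by_cases hu : Lam r lam (i+j) < Lam r lam (j-i+1)
    · have h5 := hs1 i j h1 (by omega) (by omega) h3
      rw [if_pos ⟨h1, h2, h3, hu⟩] at h5
      have hb1 := hMv i j h1 h2 h3
      have h6 := hsM (v.2 i j) (v.1 i j) hb1.2 hb1.1
      linarith
    · have hle := not_lt.mp hu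
      have hz2' : v.2 i j = 0 := hv2 i j (Or.inr hle)
      have hz1' : v.1 i j = 0 := hv1 i j (Or.inr
        (le_trans hle (hA (i+j-1) (i+j) (by omega) (by omega))))
      rw [hz1', hz2']
      have := hc1 i j h1 h2 h3
      linarith [mul_comm s (0:ℝ)]
  · -- c2
    intro i j h1 h2 h3
    rw [hval1, hval2]
    by_cases hu : Lam r lam (i+j) < Lam r lam (j-i)
    · have h5 := hs2 i j h1 (by omega) (by omega) h3
      rw [if_pos ⟨h1, h2, h3, hu⟩] at h5
      have hb1 := (hMv (i+1) j (by omega) (by omega) h3).1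
      have hb2 := (hMv i j h1 (by omega) h3).2
      have h6 := hsM (v.2 i j) (v.1 (i+1) j) hb2 hb1
      linarith
    · have hle := not_lt.mp hu
      have hz2' : v.2 i j = 0 := hv2 i j (Or.inr
        (le_trans (hA (j-i) (j-i+1) (by omega) (by omega)) hle))
      have hz1' : v.1 (i+1) j = 0 := by
        apply hv1 (i+1) j
        refine Or.inr ?_
        have e1 : j - (i+1) + 1 = j - i := by omega
        have e2 : i + 1 + j - 1 = i + j := by omega
        rw [e1, e2]
        exact hle
      rw [hz1', hz2']
      have := hc2 i j h1 h2 h3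
      linarith
  · -- c3
    intro i j h1 h2 h3
    constructor
    · rw [hval1, hval2]
      by_cases hu : Lam r lam (i+j) < Lam r lam (j-i+1)
      · have h5 := hs3 i j h1 (by omega) (by omega) (by omega)
        rw [if_pos ⟨h1, h2, h3, hu⟩] at h5
        have hb1 := (hMv i (j+1) h1 (by omega) h3).1
        have hb2 := (hMv i j h1 h2 (by omega)).2
        have h6 := hsM (v.1 i (j+1)) (v.2 i j) hb1 hb2
        linarith
      · have hle := not_lt.mp hu
        have hz2' : v.2 i j = 0 := hv2 i j (Or.inr hle)
        have hz1' : v.1 i (j+1) = 0 := by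
          apply hv1 i (j+1)
          refine Or.inr ?_
          have e1 : j + 1 - i + 1 = j - i + 2 := by omega
          have e2 : i + (j+1) - 1 = i + j := by omega
          rw [e1, e2]
          exact le_trans (hA (j-i+1) (j-i+2) (by omega) (by omega)) hle
        rw [hz1', hz2']
        have := (hc3 i j h1 h2 h3).1
        linarith
    · rw [hval1, hval2]
      by_cases hu : Lam r lam (i+j+1) < Lam r lam (j-i+1)
      · have h5 := hs4 i j h1 (by omega) (by omega) (by omega)
        rw [if_pos ⟨h1, h2, h3, hu⟩] at h5
        have hb1 := (hMv (i+1) (j+1) (by omega) (by omega) h3).1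
        have hb2 := (hMv i j h1 h2 (by omega)).2
        have h6 := hsM (v.1 (i+1) (j+1)) (v.2 i j) hb1 hb2
        linarith
      · have hle := not_lt.mp hu
        have hz2' : v.2 i j = 0 := hv2 i j (Or.inr
          (le_trans hle (hA (i+j) (i+j+1) (by omega) (by omega))))
        have hz1' : v.1 (i+1) (j+1) = 0 := by
          apply hv1 (i+1) (j+1)
          refine Or.inr ?_
          have e1 : j + 1 - (i+1) + 1 = j - i + 1 := by omega
          have e2 : i + 1 + (j+1) - 1 = i + j + 1 := by omega
          rw [e1, e2]
          exact hle
        rw [hz1', hz2']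
        have := (hc3 i j h1 h2 h3).2
        linarith
  · -- c4
    intro i h1 h2
    rw [hval2]
    by_cases hu : 0 < Lam r lam (r-i+1)
    · have h5 := hs5 i h1 h2
      rw [if_pos ⟨h1, h2, rfl, hu⟩] at h5
      have hb2 := (hMv i r h1 h2 le_rfl).2
      have h6 := hsM 0 (v.2 i r) (by rw [abs_zero]; linarith) hb2
      have h7 : s * (0:ℝ) = 0 := by ring
      linarith [h6, h7]
    · have hle := not_lt.mp hu
      have hz2' : v.2 i r = 0 := hv2 i r (Or.inr
        (le_trans hle (hN (i+r) (by omega))))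
      rw [hz2']
      have := hc4 i h1 h2
      linarith
  · intro i j hcnd
    rw [hval1, hz1 i j hcnd, hv1 i j (Or.inl hcnd)]
    ring
  · intro i j hcnd
    rw [hval2, hz2 i j hcnd, hv2 i j (Or.inl hcnd)]
    ring

end Span

end

end BZaux

namespace BZaux

open Finset

noncomputable section

section FreeY

variable {r : ℕ} {lam : ℕ → ℝ}

lemma free_y (hr : 1 ≤ r) (hld : ∀ k, 1 ≤ k → k < r → lam (k + 1) ≤ lam k)
    (hl0 : 0 ≤ lam r) (hl1 : 0 < lam 1) :
    ∀ i, 1 ≤ i → i ≤ r → ∃ j, i ≤ j ∧ j ≤ r ∧ Lam r lam (i+j) < Lam r lam (j-i+1) := by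
  intro i h1 h2
  by_contra hcon
  push_neg at hcon
  have hA := Lam_anti hld hl0
  have hAeq : ∀ j, i ≤ j → j ≤ r → Lam r lam (j-i+1) = Lam r lam (i+j) := by
    intro j hj1 hj2
    have hx := hcon j hj1 hj2
    have h' := hA (j-i+1) (i+j) (by omega) (by omega)
    linarith
  set k := 2*i - 1 with hk
  have hk1 : 1 ≤ k := by omega
  have hchain : ∀ t : ℕ, (∀ s, s < t → 1 + s*k ≤ r - i + 1) →
      Lam r lam (1 + t*k) = Lam r lam 1 := by
    intro t
    induction t with
    | zero => intro _; norm_num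
    | succ m ih =>
      intro hbelow
      have hm : 1 + m*k ≤ r - i + 1 := hbelow m (by omega)
      set j0 := i + m*k with hj0
      have he := hAeq j0 (by omega) (by omega)
      have e1 : j0 - i + 1 = 1 + m*k := by omega
      have e2 : i + j0 = 1 + (m+1)*k := by
        rw [hj0, Nat.succ_mul, hk]
        omega
      rw [e1, e2] at he
      rw [← he]
      exact ih (fun s hs => hbelow s (by omega))
  have hP : ∃ t : ℕ, r - i + 1 < 1 + t*k := by
    refine ⟨r+1, ?_⟩
    have : r + 1 ≤ (r+1)*k := Nat.le_mul_of_pos_right _ (by omega)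
    omega
  set t0 := Nat.find hP with ht0
  have hfound : r - i + 1 < 1 + t0*k := Nat.find_spec hP
  have hmin : ∀ s, s < t0 → 1 + s*k ≤ r - i + 1 := by
    intro s hs
    have := Nat.find_min hP hs
    omega
  have hLt0 : Lam r lam (1 + t0*k) = Lam r lam 1 := hchain t0 hmin
  have hLam1 : Lam r lam 1 = lam 1 := if_pos hr
  by_cases hcase : 1 + t0*k ≤ r
  · have h3 : Lam r lam (1 + t0*k) ≤ Lam r lam (r-i+1) :=
      Lam_anti hld hl0 (r-i+1) (1+t0*k) (by omega) (by omega)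
    have h4 : Lam r lam (r-i+1) = Lam r lam (i+r) := hAeq r h2 le_rfl
    have h5 : Lam r lam (i+r) = 0 := by
      unfold Lam; rw [if_neg (by omega)]
    rw [hLt0, hLam1] at h3
    rw [h4, h5] at h3
    linarith
  · have h5 : Lam r lam (1 + t0*k) = 0 := by
      unfold Lam; rw [if_neg (by omega)]
    rw [hLt0, hLam1] at h5
    linarith

end FreeY

/-- Restriction to a finite window, as a linear map. -/
def restrMap (r : ℕ) : ((ℕ → ℕ → ℝ) × (ℕ → ℕ → ℝ)) →ₗ[ℝ]
    ((Fin (r+1) → Fin (r+1) → ℝ) × (Fin (r+1) → Fin (r+1) → ℝ)) where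
  toFun p := (fun a b => p.1 a b, fun a b => p.2 a b)
  map_add' p q := rfl
  map_smul' a p := rfl

lemma Vsub_findim (r : ℕ) (lam : ℕ → ℝ) :
    FiniteDimensional ℝ (Vsub r lam) := by
  apply Module.Finite.of_injective ((restrMap r).comp (Vsub r lam).subtype)
  rintro ⟨v, hv1, hv2⟩ ⟨w, hw1, hw2⟩ hvw
  simp only [LinearMap.comp_apply, Submodule.subtype_apply, restrMap] at hvw
  have hvw1 := congrArg Prod.fst hvw
  have hvw2 := congrArg Prod.snd hvw
  simp only [LinearMap.coe_mk, AddHom.coe_mk] at hvw1 hvw2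
  ext i j
  · by_cases ht : 1 ≤ i ∧ i ≤ j ∧ j ≤ r
    · have hij : i < r + 1 := by omega
      have hjj : j < r + 1 := by omega
      have := congrFun (congrFun hvw1 ⟨i, hij⟩) ⟨j, hjj⟩
      simpa using this
    · rw [hv1 i j (Or.inl ht), hw1 i j (Or.inl ht)]
  · by_cases ht : 1 ≤ i ∧ i ≤ j ∧ j ≤ r
    · have hij : i < r + 1 := by omega
      have hjj : j < r + 1 := by omega
      have := congrFun (congrFun hvw2 ⟨i, hij⟩) ⟨j, hjj⟩
      simpa using this
    · rw [hv2 i j (Or.inl ht), hw2 i j (Or.inl ht)]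

lemma Icc_zero_range (m : ℕ) : Icc 0 m = Finset.range (m+1) := by
  ext x; simp [mem_Icc, mem_range]

/-- The partial sums of `lam - mu` are given by the coefficients `c`. -/
lemma partial_sum_eq (r : ℕ) (hr : 1 ≤ r) (lam mu : ℕ → ℝ) (c : ℕ → ℤ)
    (hdiff : (fun k : Fin r => lam ((k : ℕ) + 1) - mu ((k : ℕ) + 1)) =
      ∑ i ∈ Finset.Icc 1 r, (c i : ℝ) • simpleRootB r i) :
    ∀ j, 1 ≤ j → j ≤ r → ∑ k ∈ Icc 1 j, (lam k - mu k) = (c j : ℝ) := by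
  have hEval : ∀ m (hm : m < r), lam (m+1) - mu (m+1)
      = (c (m+1) : ℝ) - (if 1 ≤ m then (c m : ℝ) else 0) := by
    intro m hm
    have hc := congrFun hdiff ⟨m, hm⟩
    simp only [Finset.sum_apply, Pi.smul_apply, smul_eq_mul] at hc
    rw [hc]
    have hterm : ∀ i ∈ Finset.Icc 1 r, (c i:ℝ) * simpleRootB r i ⟨m, hm⟩
        = (c i:ℝ) * (if m+1 = i then (1:ℝ) else 0)
          - (c i:ℝ) * (if m+1 = i+1 then (1:ℝ) else 0) := by
      intro i hi
      have hi' := mem_Icc.mp hi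
      by_cases hir : i = r
      · rw [simpleRootB, if_pos hir]
        show (c i:ℝ) * (if m + 1 = r then (1:ℝ) else 0) = _
        rw [hir, if_neg (by omega : ¬ (m+1 = r+1))]
        ring
      · rw [simpleRootB, if_neg hir]
        show (c i:ℝ) * ((if m + 1 = i then (1:ℝ) else 0) - (if m + 1 = i + 1 then (1:ℝ) else 0)) = _
        ring
    rw [Finset.sum_congr rfl hterm, Finset.sum_sub_distrib]
    have hs1 : ∑ i ∈ Finset.Icc 1 r, (c i:ℝ) * (if m+1 = i then (1:ℝ) else 0)
        = (c (m+1) : ℝ) := by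
      have he : ∀ i ∈ Finset.Icc 1 r, (c i:ℝ) * (if m+1 = i then (1:ℝ) else 0)
          = if m+1 = i then (c i:ℝ) else 0 := by
        intro i _
        split <;> ring
      rw [Finset.sum_congr rfl he, Finset.sum_ite_eq,
        if_pos (mem_Icc.mpr ⟨by omega, by omega⟩)]
    have hs2 : ∑ i ∈ Finset.Icc 1 r, (c i:ℝ) * (if m+1 = i+1 then (1:ℝ) else 0)
        = (if 1 ≤ m then (c m:ℝ) else 0) := by
      have he : ∀ i ∈ Finset.Icc 1 r, (c i:ℝ) * (if m+1 = i+1 then (1:ℝ) else 0)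
          = if m = i then (c i:ℝ) else 0 := by
        intro i _
        by_cases h : m = i
        · rw [if_pos (by omega), if_pos h]; ring
        · rw [if_neg (by omega), if_neg h]; ring
      rw [Finset.sum_congr rfl he, Finset.sum_ite_eq]
      by_cases hm1 : 1 ≤ m
      · rw [if_pos (mem_Icc.mpr ⟨hm1, by omega⟩), if_pos hm1]
      · rw [if_neg (by rw [mem_Icc]; omega), if_neg hm1]
    rw [hs1, hs2]
  intro j
  induction j with
  | zero => intro h1 h2; omega
  | succ m ih =>
    intro h1 h2
    rcases Nat.eq_zero_or_pos m with hm | hm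
    · subst hm
      rw [Finset.Icc_self, Finset.sum_singleton]
      have := hEval 0 (by omega)
      simpa using this
    · rw [Finset.sum_Icc_succ_top (by omega), ih (by omega) (by omega)]
      rw [hEval m (by omega), if_pos (show 1 ≤ m by omega)]
      ring

end

end BZaux

set_option maxHeartbeats 1000000
set_option synthInstance.maxHeartbeats 200000

/-- **Codimension of the weight fiber in the type `B`/`C` BZ-polytope.**
For a primitive pair `(λ, μ)` (i.e. `λ − μ = ∑ c_i α_i` with all `c_i` positive integers,
`α_i = e_i − e_{i+1}` for `i < r`, `α_r = e_r`), the affine dimension of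
`BZ_{λ,μ} = {T ∈ BZ_λ : wt T = μ}` equals that of `BZ_λ` minus `r`. -/
theorem dim_BZ_weight_fiber_BC
    (r : ℕ) (hr : 1 ≤ r) (lam mu : ℕ → ℝ)
    (hlam_dec : ∀ i, 1 ≤ i → i < r → lam (i + 1) ≤ lam i) (hlam_nonneg : 0 ≤ lam r)
    (hmu_dec : ∀ i, 1 ≤ i → i < r → mu (i + 1) ≤ mu i) (hmu_nonneg : 0 ≤ mu r)
    (c : ℕ → ℤ) (hc : ∀ i, 1 ≤ i → i ≤ r → 0 < c i)
    (hdiff : (fun k : Fin r => lam ((k : ℕ) + 1) - mu ((k : ℕ) + 1)) =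
      ∑ i ∈ Finset.Icc 1 r, (c i : ℝ) • simpleRootB r i) :
    affDim {p ∈ BZsetBC r lam | ∀ i, 1 ≤ i → i ≤ r → wtBC r p i = mu i} =
      affDim (BZsetBC r lam) - r := by
  classical
  have hDeq := BZaux.partial_sum_eq r hr lam mu c hdiff
  have hDpos : ∀ j, 1 ≤ j → j ≤ r → (1:ℝ) ≤ ∑ k ∈ Finset.Icc 1 j, (lam k - mu k) := by
    intro j h1 h2
    rw [hDeq j h1 h2]
    have := hc j h1 h2
    exact_mod_cast this
  obtain ⟨q0, hq0mem, hq0wt, hq0str⟩ :=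
    BZaux.strict_fiber_point hr hlam_dec hlam_nonneg hmu_dec hmu_nonneg hDpos
  have hmu1 : 0 ≤ mu 1 := le_trans hmu_nonneg (BZaux.decChain hmu_dec 1 r le_rfl hr le_rfl)
  have hl1 : 0 < lam 1 := by
    have h := hDpos 1 le_rfl hr
    rw [Finset.Icc_self, Finset.sum_singleton] at h
    linarith
  set S := BZsetBC r lam with hS
  set Fib := {p ∈ BZsetBC r lam | ∀ i, 1 ≤ i → i ≤ r → wtBC r p i = mu i} with hFib
  have hVle : ∀ v ∈ BZaux.Vsub r lam, v ∈ vectorSpan ℝ S ∧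
      ((∀ k : Fin r, wtBC r v ((k:ℕ)+1) = 0) → v ∈ vectorSpan ℝ Fib) := by
    intro v hv
    obtain ⟨t, ht0, hmem⟩ := BZaux.perturb hlam_dec hlam_nonneg hr hq0mem hq0str hv
    have hp1 : q0 + t • v ∈ S := hmem t (by rw [abs_of_pos ht0])
    have hp2 : q0 + (-t) • v ∈ S := hmem (-t) (by rw [abs_neg, abs_of_pos ht0])
    have hdiffv : (q0 + t • v) - (q0 + (-t) • v) = (2*t) • v := by
      module
    have hcoef : v = (1/(2*t)) • ((2*t) • v) := by
      rw [smul_smul, one_div_mul_cancel (by positivity : (2*t:ℝ) ≠ 0), one_smul]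
    constructor
    · have hm : (q0 + t • v) -ᵥ (q0 + (-t) • v) ∈ vectorSpan ℝ S :=
        vsub_mem_vectorSpan ℝ hp1 hp2
      rw [vsub_eq_sub, hdiffv] at hm
      rw [hcoef]
      exact Submodule.smul_mem _ _ hm
    · intro hker
      have hw : ∀ s : ℝ, q0 + s • v ∈ S → q0 + s • v ∈ Fib := by
        intro s hsS
        refine ⟨hsS, ?_⟩
        intro i h1 h2
        rw [BZaux.wt_add, BZaux.wt_smul]
        have hki : wtBC r v i = 0 := by
          have h3 := hker ⟨i-1, by omega⟩
          have e : (i:ℕ) - 1 + 1 = i := by omega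
          simp only [e] at h3
          exact h3
        rw [hki, hq0wt i h1 h2]; ring
      have hm : (q0 + t • v) -ᵥ (q0 + (-t) • v) ∈ vectorSpan ℝ Fib :=
        vsub_mem_vectorSpan ℝ (hw t hp1) (hw (-t) hp2)
      rw [vsub_eq_sub, hdiffv] at hm
      rw [hcoef]
      exact Submodule.smul_mem _ _ hm
  have hspanS : vectorSpan ℝ S = BZaux.Vsub r lam := by
    apply le_antisymm (BZaux.span_le_V hlam_dec hlam_nonneg)
    intro v hv
    exact (hVle v hv).1
  have hspanF : vectorSpan ℝ Fib
      = BZaux.Vsub r lam ⊓ LinearMap.ker (BZaux.Lwt r) := by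
    apply le_antisymm
    · rw [vectorSpan_def, Submodule.span_le]
      rintro w ⟨p, hp, q, hq, rfl⟩
      rw [SetLike.mem_coe, Submodule.mem_inf]
      constructor
      · exact BZaux.diff_mem_V hlam_dec hlam_nonneg hp.1 hq.1
      · rw [LinearMap.mem_ker]
        have heq : BZaux.Lwt r p = BZaux.Lwt r q := by
          funext k
          show wtBC r p ((k:ℕ)+1) = wtBC r q ((k:ℕ)+1)
          rw [hp.2 ((k:ℕ)+1) (by omega) (by have := k.isLt; omega),
            hq.2 ((k:ℕ)+1) (by omega) (by have := k.isLt; omega)]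
        show BZaux.Lwt r (p - q) = 0
        rw [map_sub, heq, sub_self]
    · rintro v hv
      obtain ⟨hv1, hv2⟩ := Submodule.mem_inf.mp hv
      apply (hVle v hv1).2
      intro k
      have h3 := LinearMap.mem_ker.mp hv2
      exact congrFun h3 k
  haveI hfd : FiniteDimensional ℝ (BZaux.Vsub r lam) := BZaux.Vsub_findim r lam
  set φ := (BZaux.Lwt r).comp (BZaux.Vsub r lam).subtype with hphi
  have hrank := LinearMap.finrank_range_add_finrank_ker φ
  have hsurj : LinearMap.range φ = ⊤ := by
    rw [eq_top_iff]
    intro u _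
    have hu : u = ∑ k : Fin r, u k • (Pi.single k (1:ℝ) : Fin r → ℝ) := by
      ext j; simp [Pi.single_apply]
    rw [hu]
    apply Submodule.sum_mem
    intro k0 _
    apply Submodule.smul_mem
    obtain ⟨j0, hj1, hj2, hj3⟩ := BZaux.free_y hr hlam_dec hlam_nonneg hl1
      ((k0:ℕ)+1) (by omega) (by have := k0.isLt; omega)
    set vk : (ℕ→ℕ→ℝ)×(ℕ→ℕ→ℝ) := (fun _ _ => 0,
      fun a b => if a = (k0:ℕ)+1 ∧ b = j0 then (-(1:ℝ)/2) else 0) with hvk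
    have hvkV : vk ∈ BZaux.Vsub r lam := by
      constructor
      · intro i j _; rfl
      · intro i j hcond
        show (if i = (k0:ℕ)+1 ∧ j = j0 then (-(1:ℝ)/2) else 0) = 0
        by_cases he : i = (k0:ℕ)+1 ∧ j = j0
        · exfalso
          obtain ⟨rfl, rfl⟩ := he
          rcases hcond with hcond | hcond
          · exact hcond ⟨by omega, hj1, hj2⟩
          · linarith [hj3]
        · rw [if_neg he]
    refine ⟨⟨vk, hvkV⟩, ?_⟩
    funext k
    show wtBC r vk ((k:ℕ)+1) = (Pi.single k0 (1:ℝ) : Fin r → ℝ) k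
    have hz1 : ∀ a, (∑ j ∈ Finset.Icc a r, vk.1 a j) = 0 := by
      intro a
      apply Finset.sum_eq_zero
      intro j _
      rfl
    rw [wtBC, hz1, hz1]
    have hy : ∑ j ∈ Finset.Icc ((k:ℕ)+1) r, vk.2 ((k:ℕ)+1) j
        = if (k:ℕ) = (k0:ℕ) then (-(1:ℝ)/2) else 0 := by
      by_cases hkk : (k:ℕ) = (k0:ℕ)
      · rw [if_pos hkk]
        have hterm : ∀ j ∈ Finset.Icc ((k:ℕ)+1) r, vk.2 ((k:ℕ)+1) j
            = if j = j0 then (-(1:ℝ)/2) else 0 := by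
          intro j _
          show (if (k:ℕ)+1 = (k0:ℕ)+1 ∧ j = j0 then (-(1:ℝ)/2) else 0) = _
          by_cases hj : j = j0
          · rw [if_pos ⟨by omega, hj⟩, if_pos hj]
          · rw [if_neg (by tauto), if_neg hj]
        rw [Finset.sum_congr rfl hterm, Finset.sum_ite_eq' _ j0,
          if_pos (Finset.mem_Icc.mpr ⟨by omega, hj2⟩)]
      · rw [if_neg hkk]
        apply Finset.sum_eq_zero
        intro j _
        show (if (k:ℕ)+1 = (k0:ℕ)+1 ∧ j = j0 then (-(1:ℝ)/2) else 0) = 0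
        rw [if_neg (by omega)]
    rw [hy]
    by_cases hkk : (k:ℕ) = (k0:ℕ)
    · have hk : k = k0 := Fin.ext hkk
      rw [if_pos hkk, hk, Pi.single_eq_same]
      ring
    · have hk : k ≠ k0 := fun h => hkk (by rw [h])
      rw [if_neg hkk, Pi.single_eq_of_ne hk]
      ring
  have hker_eq : LinearMap.ker φ = Submodule.comap (BZaux.Vsub r lam).subtype
      (BZaux.Vsub r lam ⊓ LinearMap.ker (BZaux.Lwt r)) := by
    rw [hphi, LinearMap.ker_comp]
    ext x
    simp only [Submodule.mem_comap, Submodule.mem_inf]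
    exact ⟨fun h => ⟨x.2, h⟩, fun h => h.2⟩
  have hle2 : BZaux.Vsub r lam ⊓ LinearMap.ker (BZaux.Lwt r) ≤ BZaux.Vsub r lam :=
    inf_le_left
  have hkerdim : Module.finrank ℝ (LinearMap.ker φ)
      = Module.finrank ℝ ↥(BZaux.Vsub r lam ⊓ LinearMap.ker (BZaux.Lwt r)) := by
    rw [hker_eq]
    exact (Submodule.comapSubtypeEquivOfLe hle2).finrank_eq
  have hrangedim : Module.finrank ℝ (LinearMap.range φ) = r := by
    rw [hsurj]
    simp [finrank_top]
  show Module.finrank ℝ (vectorSpan ℝ Fib) = Module.finrank ℝ (vectorSpan ℝ S) - r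
  rw [hspanF, hspanS, ← hkerdim]
  rw [hrangedim] at hrank
  omega
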